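/- arXiv:1212.0456 — 10 statements merged into one kernel-verified Lean document; each statement's English description precedes it below -/
import Mathlib

section
/- If A is a nonempty finite subset of an abelian group G, then A is a coset of a subgroup of G if and only if E(A) = |A|^3, where E(A) is the additive energy of A. -/
open Pointwise

/-- The additive energy: number of triples `(x,y,z) ∈ A³` with `x + y - z ∈ A`. -/
def energyE {G : Type*} [AddCommGroup G] [DecidableEq G] (A : Finset G) : ℕ :=
  ((A ×ˢ A ×ˢ A).filter fun t => t.1 + t.2.1 - t.2.2 ∈ A).card

theorem coset_iff_energy_eq_cube {G : Type*} [AddCommGroup G] [DecidableEq G]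
    (A : Finset G) (hA : A.Nonempty) :
    (∃ (g : G) (H : AddSubgroup G), (A : Set G) = (g + ·) '' (H : Set G)) ↔
      energyE A = A.card ^ 3 := by
  constructor
  · rintro ⟨g, H, hAH⟩
    have hclosed : ∀ x ∈ A, ∀ y ∈ A, ∀ z ∈ A, x + y - z ∈ A := by
      intro x hx y hy z hz
      have hmem : ∀ a, a ∈ A ↔ a - g ∈ H := by
        intro a
        constructor
        · intro ha
          have : (a : G) ∈ (A : Set G) := ha
          rw [hAH] at this
          obtain ⟨h, hh, rfl⟩ := this
          simpa using hh
        · intro ha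
          have : (a : G) ∈ (A : Set G) := by
            rw [hAH]
            exact ⟨a - g, ha, by show g + (a - g) = a; rw [add_sub_cancel]⟩
          exact this
      rw [hmem] at hx hy hz ⊢
      have := H.sub_mem (H.add_mem hx hy) hz
      convert this using 1
      abel
    unfold energyE
    rw [Finset.filter_true_of_mem, Finset.card_product, Finset.card_product]
    · ring
    · rintro ⟨x, y, z⟩ ht
      simp only [Finset.mem_product] at ht
      exact hclosed x ht.1 y ht.2.1 z ht.2.2
  · intro hE
    have hclosed : ∀ x ∈ A, ∀ y ∈ A, ∀ z ∈ A, x + y - z ∈ A := by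
      have hcard : ((A ×ˢ A ×ˢ A).filter fun t => t.1 + t.2.1 - t.2.2 ∈ A).card
          = (A ×ˢ A ×ˢ A).card := by
        unfold energyE at hE
        rw [hE, Finset.card_product, Finset.card_product]; ring
      intro x hx y hy z hz
      exact Finset.filter_card_eq hcard (x, y, z) (by simp [Finset.mem_product, hx, hy, hz])
    obtain ⟨a, ha⟩ := hA
    refine ⟨a, {
      carrier := {h | a + h ∈ A}
      zero_mem' := by simpa using ha
      add_mem' := by
        intro x y hx hy
        have := hclosed _ hx _ hy a ha
        have h2 : a + (x + y) = a + x + (a + y) - a := by abel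
        show a + (x + y) ∈ A
        rw [h2]; exact this
      neg_mem' := by
        intro x hx
        have := hclosed a ha a ha _ hx
        have h2 : a + -x = a + a - (a + x) := by abel
        show a + -x ∈ A
        rw [h2]; exact this
    }, ?_⟩
    ext b
    simp only [Set.mem_image, AddSubgroup.mem_mk, Finset.coe_sort_coe, Set.mem_setOf_eq,
      Finset.mem_coe]
    constructor
    · intro hb
      exact ⟨b - a, by simpa using (show a + (b - a) ∈ A by rw [add_sub_cancel]; exact hb), by abel⟩
    · rintro ⟨h, hh, rfl⟩
      exact hh
end

section
/- Let H be a finite coset in an abelian group G, and let A be a finite subset of G with |A ∩ H| ≥ (1-ε)|A| and |A ∩ H| ≥ (1-η)|H|, where ε, η ∈ [0,1). Then E(A) ≥ (1 - 4(ε + η))|A|^3. -/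
open Pointwise

set_option maxHeartbeats 1000000

lemma coset_closed {G : Type*} [AddCommGroup G] [DecidableEq G] (H : Finset G)
    (hH : ∃ (g : G) (H₀ : AddSubgroup G), (H : Set G) = (g + ·) '' (H₀ : Set G))
    {x y z : G} (hx : x ∈ H) (hy : y ∈ H) (hz : z ∈ H) : x + y - z ∈ H := by
  obtain ⟨g, H₀, hs⟩ := hH
  have hx' : x ∈ (H : Set G) := hx
  have hy' : y ∈ (H : Set G) := hy
  have hz' : z ∈ (H : Set G) := hz
  rw [hs] at hx' hy' hz'
  obtain ⟨a, ha, rfl⟩ := hx'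
  obtain ⟨b, hb, rfl⟩ := hy'
  obtain ⟨c, hc, rfl⟩ := hz'
  have : g + a + (g + b) - (g + c) ∈ (H : Set G) := by
    rw [hs]
    exact ⟨a + b - c, sub_mem (add_mem ha hb) hc, by simp; abel⟩
  exact this

theorem energy_of_near_coset {G : Type*} [AddCommGroup G] [DecidableEq G]
    (A H : Finset G) (hH : ∃ (g : G) (H₀ : AddSubgroup G), (H : Set G) = (g + ·) '' (H₀ : Set G))
    (ε η : ℝ) (hε : 0 ≤ ε) (hε' : ε < 1) (hη : 0 ≤ η) (hη' : η < 1)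
    (h1 : (1 - ε) * A.card ≤ (A ∩ H).card)
    (h2 : (1 - η) * H.card ≤ (A ∩ H).card) :
    (1 - 4 * (ε + η)) * (A.card : ℝ) ^ 3 ≤ energyE A := by
  classical
  set B : Finset G := A ∩ H with hB
  have hBA : B ⊆ A := Finset.inter_subset_left
  have hBH : B ⊆ H := Finset.inter_subset_right
  -- fiber bound
  have fiber : ∀ x ∈ B, ∀ y ∈ B,
      (2 * (B.card : ℤ) - H.card) ≤ ((B.filter fun z => x + y - z ∈ B).card : ℤ) := by
    intro x hx y hy
    set C : Finset G := B.image (fun w => x + y - w) with hC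
    have hfe : B.filter (fun z => x + y - z ∈ B) = B ∩ C := by
      ext z
      simp only [Finset.mem_filter, Finset.mem_inter, hC, Finset.mem_image]
      constructor
      · rintro ⟨hz, hz2⟩
        exact ⟨hz, x + y - z, hz2, by abel⟩
      · rintro ⟨hz, w, hw, rfl⟩
        exact ⟨hz, by simpa using hw⟩
    have hCcard : C.card = B.card :=
      Finset.card_image_of_injective _ (fun u v huv => sub_right_injective huv)
    have hCH : C ⊆ H := by
      intro w hw
      rw [hC, Finset.mem_image] at hw
      obtain ⟨u, hu, rfl⟩ := hw
      exact coset_closed H hH (hBH hx) (hBH hy) (hBH hu)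
    have hunion : (B ∪ C).card ≤ H.card :=
      Finset.card_le_card (Finset.union_subset hBH hCH)
    have hie := Finset.card_union_add_card_inter B C
    rw [hfe]
    omega
  -- counting: energy of B-restricted triples
  have hsum : ((B ×ˢ B ×ˢ B).filter fun t => t.1 + t.2.1 - t.2.2 ∈ B).card
      = ∑ x ∈ B, ∑ y ∈ B, (B.filter fun z => x + y - z ∈ B).card := by
    rw [Finset.card_filter, Finset.sum_product]
    refine Finset.sum_congr rfl fun x _ => ?_
    rw [Finset.sum_product]
    refine Finset.sum_congr rfl fun y _ => ?_
    rw [Finset.card_filter]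
  have hcount : (B.card : ℤ) * B.card * (2 * B.card - H.card)
      ≤ (((B ×ˢ B ×ˢ B).filter fun t => t.1 + t.2.1 - t.2.2 ∈ B).card : ℤ) := by
    rw [hsum]
    push_cast
    calc (B.card : ℤ) * B.card * (2 * B.card - H.card)
        = ∑ x ∈ B, ∑ y ∈ B, (2 * (B.card : ℤ) - H.card) := by
          simp [Finset.sum_const, mul_assoc]; ring
      _ ≤ ∑ x ∈ B, ∑ y ∈ B, ((B.filter fun z => x + y - z ∈ B).card : ℤ) := by
          refine Finset.sum_le_sum fun x hx => Finset.sum_le_sum fun y hy => ?_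
          exact fiber x hx y hy
  have hsubset : ((B ×ˢ B ×ˢ B).filter fun t => t.1 + t.2.1 - t.2.2 ∈ B)
      ⊆ ((A ×ˢ A ×ˢ A).filter fun t => t.1 + t.2.1 - t.2.2 ∈ A) := by
    intro t ht
    simp only [Finset.mem_filter, Finset.mem_product] at ht ⊢
    exact ⟨⟨hBA ht.1.1, hBA ht.1.2.1, hBA ht.1.2.2⟩, hBA ht.2⟩
  have hE : ((B.card : ℤ) * B.card * (2 * B.card - H.card)) ≤ (energyE A : ℤ) := by
    refine hcount.trans ?_
    exact_mod_cast Nat.cast_le.mpr (Finset.card_le_card hsubset)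
  -- now pure real arithmetic
  set a : ℝ := (A.card : ℝ) with ha
  set b : ℝ := (B.card : ℝ) with hb'
  set h : ℝ := (H.card : ℝ) with hh'
  have ha0 : 0 ≤ a := by positivity
  have hb0 : 0 ≤ b := by positivity
  have hba : b ≤ a := by
    show (B.card : ℝ) ≤ (A.card : ℝ)
    exact_mod_cast Finset.card_le_card hBA
  have hbh : b ≤ h := by
    show (B.card : ℝ) ≤ (H.card : ℝ)
    exact_mod_cast Finset.card_le_card hBH
  have hbe : (1 - ε) * a ≤ b := h1
  have hbn : (1 - η) * h ≤ b := h2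
  have hER : b * b * (2 * b - h) ≤ (energyE A : ℝ) := by
    show (B.card : ℝ) * B.card * (2 * B.card - H.card) ≤ (energyE A : ℝ)
    have h3 : (((B.card : ℤ) * B.card * (2 * B.card - H.card) : ℤ) : ℝ)
        ≤ ((energyE A : ℤ) : ℝ) := Int.cast_le.mpr hE
    push_cast at h3
    linarith
  have hE0 : (0 : ℝ) ≤ (energyE A : ℝ) := by positivity
  rcases le_or_gt (1 - 4 * (ε + η)) 0 with hc | hc
  · have : (1 - 4 * (ε + η)) * a ^ 3 ≤ 0 :=
      mul_nonpos_of_nonpos_of_nonneg hc (by positivity)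
    linarith
  · -- then ε + η < 1/4
    have hsmall : ε + η < 1 / 4 := by linarith
    have hη4 : η < 1 / 4 := by linarith
    have hε4 : ε < 1 / 4 := by linarith
    have key1 : b * (1 - 2 * η) ≤ (1 - η) * (2 * b - h) := by nlinarith
    have hbpos : (1 - ε) * a ≤ b := hbe
    have key2 : (1 - ε) * a ≤ b := hbe
    -- b³(1-2η) ≤ (1-η) b²(2b-h)
    have key3 : b ^ 3 * (1 - 2 * η) ≤ (1 - η) * (b * b * (2 * b - h)) := by nlinarith [sq_nonneg b, mul_le_mul_of_nonneg_left key1 (mul_nonneg hb0 hb0)]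
    have key4 : ((1 - ε) * a) ^ 3 ≤ b ^ 3 := by
      have h1' : 0 ≤ (1 - ε) * a := mul_nonneg (by linarith) ha0
      exact pow_le_pow_left₀ h1' key2 3
    have key5 : (1 - 4 * (ε + η)) * (1 - η) * a ^ 3 ≤ ((1 - ε) * a) ^ 3 * (1 - 2 * η) := by
      have t0 : (0:ℝ) ≤ ε * η := mul_nonneg hε hη
      have t1 : (0:ℝ) ≤ 3 - ε - 6 * η + 2 * (ε * η) := by linarith
      have t2 : (0:ℝ) ≤ ε * ε * (3 - ε - 6 * η + 2 * (ε * η)) :=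
        mul_nonneg (mul_nonneg hε hε) t1
      have t3 : (0:ℝ) ≤ η * (3 - 4 * η) :=
        mul_nonneg hη (by linarith)
      have : (1 - 4 * (ε + η)) * (1 - η) ≤ (1 - ε) ^ 3 * (1 - 2 * η) := by
        linarith [t0, t2, t3]
      calc (1 - 4 * (ε + η)) * (1 - η) * a ^ 3 ≤ (1 - ε) ^ 3 * (1 - 2 * η) * a ^ 3 := by
            apply mul_le_mul_of_nonneg_right this (by positivity)
        _ = ((1 - ε) * a) ^ 3 * (1 - 2 * η) := by ring
    have h2η : 0 ≤ 1 - 2 * η := by linarith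
    have key6 : ((1 - ε) * a) ^ 3 * (1 - 2 * η) ≤ b ^ 3 * (1 - 2 * η) :=
      mul_le_mul_of_nonneg_right key4 h2η
    have hηpos : 0 < 1 - η := by linarith
    have : (1 - 4 * (ε + η)) * (1 - η) * a ^ 3 ≤ (1 - η) * (energyE A : ℝ) := by
      calc (1 - 4 * (ε + η)) * (1 - η) * a ^ 3 ≤ b ^ 3 * (1 - 2 * η) := key5.trans key6
        _ ≤ (1 - η) * (b * b * (2 * b - h)) := key3
        _ ≤ (1 - η) * (energyE A : ℝ) := by
            exact mul_le_mul_of_nonneg_left hER (le_of_lt hηpos)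
    have h' : (1 - η) * ((1 - 4 * (ε + η)) * a ^ 3) ≤ (1 - η) * (energyE A : ℝ) := by
      nlinarith [this]
    exact le_of_mul_le_mul_left h' hηpos
end

section
/- If A is a finite subset of an abelian group with E(A) ≥ (1-δ)|A|^3 for δ ≤ 1/100, then there is a coset H of a subgroup such that |A ∩ H| ≥ (1 - C δ^{1/2})|A| and |A ∩ H| ≥ (1 - C δ^{1/2})|H|, for some absolute constant C. -/
open Pointwise Finset

section Aux
variable {G : Type*} [AddCommGroup G] [DecidableEq G]

/-- r A d = number of x ∈ A with x - d ∈ A, i.e. |A ∩ (A+d)|. -/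
def rA (A : Finset G) (d : G) : ℕ := (A.filter fun x => x - d ∈ A).card

lemma rA_le (A : Finset G) (d : G) : rA A d ≤ A.card := card_filter_le _ _

lemma rA_triangle (A : Finset G) (u v : G) :
    rA A u + rA A v ≤ rA A (u - v) + A.card := by
  classical
  set Su := A.filter fun x => x - u ∈ A with hSu
  set Sv := A.filter fun x => x - v ∈ A with hSv
  have h1 : (Su ∩ Sv).card ≤ rA A (u - v) := by
    apply Finset.card_le_card_of_injOn (fun x => x - v)
    · intro x hx
      rw [Finset.mem_coe, Finset.mem_inter, hSu, hSv, Finset.mem_filter, Finset.mem_filter] at hx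
      simp only [rA, Finset.mem_coe, Finset.mem_filter]
      refine ⟨hx.2.2, ?_⟩
      rw [sub_sub_sub_cancel_right]
      exact hx.1.2
    · intro x _ y _ h
      have := congrArg (· + v) h
      simpa using this
  have h2 : (Su ∪ Sv).card ≤ A.card := by
    apply Finset.card_le_card
    intro x hx
    rcases Finset.mem_union.1 hx with h | h
    · exact Finset.mem_of_mem_filter x h
    · exact Finset.mem_of_mem_filter x h
  have h3 := Finset.card_union_add_card_inter Su Sv
  have e1 : rA A u = Su.card := rfl
  have e2 : rA A v = Sv.card := rfl
  omega

lemma energy_eq (A : Finset G) : energyE A = ∑ x ∈ A, ∑ z ∈ A, rA A (z - x) := by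
  classical
  unfold energyE
  rw [Finset.card_filter, Finset.sum_product]
  refine Finset.sum_congr rfl fun x _ => ?_
  rw [Finset.sum_product, Finset.sum_comm]
  refine Finset.sum_congr rfl fun z _ => ?_
  simp only [rA]; rw [Finset.card_filter]
  refine Finset.sum_congr rfl fun y _ => ?_
  have h : x + y - z = y - (z - x) := by abel
  rw [h]

lemma sum_rA_le (A D : Finset G) : ∑ d ∈ D, rA A d ≤ A.card * A.card := by
  classical
  have h : ∑ d ∈ D, rA A d = ∑ x ∈ A, (D.filter fun d => x - d ∈ A).card := by
    unfold rA
    simp_rw [Finset.card_filter]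
    exact Finset.sum_comm
  rw [h]
  have hbound : ∀ x ∈ A, (D.filter fun d => x - d ∈ A).card ≤ A.card := by
    intro x _
    apply Finset.card_le_card_of_injOn (fun d => x - d)
    · intro d hd
      exact (Finset.mem_filter.mp hd).2
    · intro d _ e _ h
      simpa using sub_right_injective h
  calc ∑ x ∈ A, (D.filter fun d => x - d ∈ A).card ≤ ∑ x ∈ A, A.card :=
        Finset.sum_le_sum hbound
    _ = A.card * A.card := by rw [Finset.sum_const, smul_eq_mul]

end Aux

set_option maxHeartbeats 1000000 in
theorem near_coset_of_large_energy :
    ∃ C : ℝ, 0 < C ∧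
      ∀ (G : Type) (_ : AddCommGroup G) (_ : DecidableEq G) (A : Finset G),
        A.Nonempty → ∀ δ : ℝ, 0 ≤ δ → δ ≤ 1 / 100 →
        (1 - δ) * (A.card : ℝ) ^ 3 ≤ energyE A →
        ∃ (H : Finset G), (∃ (g : G) (H₀ : AddSubgroup G), (H : Set G) = (g + ·) '' (H₀ : Set G)) ∧
          (1 - C * δ ^ ((1 : ℝ) / 2)) * A.card ≤ ((A ∩ H).card : ℝ) ∧
          (1 - C * δ ^ ((1 : ℝ) / 2)) * H.card ≤ ((A ∩ H).card : ℝ) := by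
  classical
  refine ⟨10, by norm_num, ?_⟩
  intro G _ _ A hA δ hδ0 hδ1 hE
  classical
  set N : ℝ := (A.card : ℝ) with hN
  have hn1 : (1:ℝ) ≤ N := by
    rw [hN]; exact_mod_cast hA.card_pos
  have hN0 : (0:ℝ) < N := by linarith
  set s : ℝ := δ ^ ((1:ℝ)/2) with hs_def
  have hs_sqrt : s = Real.sqrt δ := by rw [hs_def, Real.sqrt_eq_rpow]
  have hs0 : (0:ℝ) ≤ s := by rw [hs_sqrt]; exact Real.sqrt_nonneg δ
  have hsq : s * s = δ := by rw [hs_sqrt]; exact Real.mul_self_sqrt hδ0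
  have hs10 : s ≤ 1/10 := by
    rw [hs_sqrt]
    have : Real.sqrt δ ≤ Real.sqrt (1/100) := Real.sqrt_le_sqrt hδ1
    rwa [show (1/100:ℝ) = (1/10)^2 by norm_num, Real.sqrt_sq (by norm_num : (0:ℝ) ≤ 1/10)] at this
  -- Step A : sum of deficiencies is small
  have hrle : ∀ d : G, (rA A d : ℝ) ≤ N := by
    intro d; rw [hN]; exact_mod_cast rA_le A d
  have hkey : ∑ x ∈ A, ∑ z ∈ A, (N - (rA A (z - x) : ℝ)) ≤ δ * N^3 := by
    have hEs : ((energyE A : ℝ)) = ∑ x ∈ A, ∑ z ∈ A, (rA A (z - x) : ℝ) := by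
      rw [energy_eq]; push_cast; ring
    have hsplit : ∑ x ∈ A, ∑ z ∈ A, (N - (rA A (z - x) : ℝ))
        = N^3 - ∑ x ∈ A, ∑ z ∈ A, (rA A (z - x) : ℝ) := by
      have h1 : ∀ x ∈ A, ∑ z ∈ A, (N - (rA A (z - x) : ℝ)) = N * N - ∑ z ∈ A, (rA A (z - x) : ℝ) := by
        intro x _
        rw [Finset.sum_sub_distrib, Finset.sum_const, nsmul_eq_mul, ← hN]
      rw [Finset.sum_congr rfl h1, Finset.sum_sub_distrib, Finset.sum_const, nsmul_eq_mul, ← hN]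
      ring
    rw [hsplit, ← hEs]
    nlinarith [hE]
  -- Step B : bad partners
  set Bd : G → Finset G := fun a => A.filter fun b => (rA A (b - a) : ℝ) < (1 - s) * N with hBd
  have hBsum : ∑ a ∈ A, ((Bd a).card : ℝ) ≤ s * N ^ 2 := by
    have h1 : ∀ a ∈ A, ((Bd a).card : ℝ) * (s * N) ≤ ∑ b ∈ A, (N - (rA A (b - a) : ℝ)) := by
      intro a _
      have h2 : ((Bd a).card : ℝ) * (s * N) = ∑ _b ∈ Bd a, (s * N) := by
        rw [Finset.sum_const, nsmul_eq_mul]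
      rw [h2]
      have h3 : ∑ b ∈ Bd a, (s * N) ≤ ∑ b ∈ Bd a, (N - (rA A (b - a) : ℝ)) := by
        apply Finset.sum_le_sum
        intro b hb
        have := (Finset.mem_filter.mp hb).2
        linarith
      refine h3.trans ?_
      apply Finset.sum_le_sum_of_subset_of_nonneg (Finset.filter_subset _ _)
      intro b _ _
      linarith [hrle (b - a)]
    have h4 : (∑ a ∈ A, ((Bd a).card : ℝ)) * (s * N) ≤ δ * N ^ 3 := by
      rw [Finset.sum_mul]
      exact (Finset.sum_le_sum h1).trans hkey
    by_cases hsz : s = 0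
    · -- then δ = 0 and each term of hkey is 0, so all Bd a are empty
      have hδz : δ = 0 := by rw [← hsq, hsz]; ring
      have hnn : ∀ x ∈ A, (0:ℝ) ≤ ∑ z ∈ A, (N - (rA A (z - x) : ℝ)) := by
        intro x _
        apply Finset.sum_nonneg
        intro z _; linarith [hrle (z - x)]
      have hz : ∑ x ∈ A, ∑ z ∈ A, (N - (rA A (z - x) : ℝ)) = 0 := by
        have := Finset.sum_nonneg hnn
        rw [hδz] at hkey
        linarith
      have hall : ∀ x ∈ A, ∀ z ∈ A, (rA A (z - x) : ℝ) = N := by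
        intro x hx z hz'
        have h5 := (Finset.sum_eq_zero_iff_of_nonneg hnn).mp hz x hx
        have h6 : ∀ z' ∈ A, (0:ℝ) ≤ N - (rA A (z' - x) : ℝ) := by
          intro z' _; linarith [hrle (z' - x)]
        have h7 := (Finset.sum_eq_zero_iff_of_nonneg h6).mp h5 z hz'
        linarith
      have hBe : ∀ a ∈ A, Bd a = ∅ := by
        intro a ha
        apply Finset.eq_empty_of_forall_notMem
        intro b hb
        obtain ⟨hbA, hblt⟩ := Finset.mem_filter.mp hb
        have := hall a ha b hbA
        rw [hsz] at hblt
        linarith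
      have : ∑ a ∈ A, ((Bd a).card : ℝ) = 0 := by
        apply Finset.sum_eq_zero
        intro a ha; rw [hBe a ha]; simp
      rw [this, hsz]; ring_nf; positivity
    · have hspos : 0 < s := lt_of_le_of_ne hs0 (Ne.symm hsz)
      have hsN : 0 < s * N := by positivity
      have h5 : (∑ a ∈ A, ((Bd a).card : ℝ)) * (s * N) ≤ (s * N ^ 2) * (s * N) := by
        calc (∑ a ∈ A, ((Bd a).card : ℝ)) * (s * N) ≤ δ * N ^ 3 := h4
          _ = (s * N ^ 2) * (s * N) := by rw [← hsq]; ring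
      exact le_of_mul_le_mul_right h5 hsN
  -- Step C : the set A' of vertices with few bad partners
  set A' : Finset G := A.filter (fun a => ((Bd a).card : ℝ) ≤ (2/5) * N) with hA'
  have hA'sub : A' ⊆ A := Finset.filter_subset _ _
  have hsd : ((A \ A').card : ℝ) ≤ (5/2) * s * N := by
    have h1 : ((A \ A').card : ℝ) * ((2/5) * N) ≤ ∑ a ∈ A \ A', ((Bd a).card : ℝ) := by
      rw [show ((A \ A').card : ℝ) * ((2/5) * N) = ∑ _a ∈ A \ A', ((2/5) * N) by
        rw [Finset.sum_const, nsmul_eq_mul]]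
      apply Finset.sum_le_sum
      intro a ha
      obtain ⟨haA, haN⟩ := Finset.mem_sdiff.mp ha
      have : ¬ (((Bd a).card : ℝ) ≤ (2/5) * N) := by
        intro h; exact haN (Finset.mem_filter.mpr ⟨haA, h⟩)
      linarith [not_le.mp this]
    have h2 : ∑ a ∈ A \ A', ((Bd a).card : ℝ) ≤ ∑ a ∈ A, ((Bd a).card : ℝ) := by
      apply Finset.sum_le_sum_of_subset_of_nonneg (Finset.sdiff_subset)
      intro a _ _; positivity
    have h3 : ((A \ A').card : ℝ) * ((2/5) * N) ≤ ((5/2) * s * N) * ((2/5) * N) := by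
      calc ((A \ A').card : ℝ) * ((2/5) * N) ≤ s * N ^ 2 := (h1.trans h2).trans hBsum
        _ = ((5/2) * s * N) * ((2/5) * N) := by ring
    exact le_of_mul_le_mul_right h3 (by positivity)
  have hA'card : (1 - (5/2) * s) * N ≤ (A'.card : ℝ) := by
    have h1 : (A \ A').card + A'.card = A.card := Finset.card_sdiff_add_card_eq_card hA'sub
    have h2 : ((A \ A').card : ℝ) + (A'.card : ℝ) = N := by rw [hN]; exact_mod_cast h1
    nlinarith
  have hA'ne : A'.Nonempty := by
    rw [← Finset.card_pos]
    have : (0:ℝ) < (A'.card : ℝ) := by nlinarith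
    exact_mod_cast this
  -- Step D : every pair in A' has a large common representation count
  have hpair : ∀ a ∈ A', ∀ a' ∈ A', (1 - 2*s) * N ≤ (rA A (a - a') : ℝ) := by
    intro a ha a' ha'
    obtain ⟨haA, haB⟩ := Finset.mem_filter.mp ha
    obtain ⟨haA', haB'⟩ := Finset.mem_filter.mp ha'
    have hGa : ((3:ℝ)/5) * N ≤ ((A \ Bd a).card : ℝ) := by
      have h1 : (A \ Bd a).card + (Bd a).card = A.card :=
        Finset.card_sdiff_add_card_eq_card (Finset.filter_subset _ _)
      have h2 : ((A \ Bd a).card : ℝ) + ((Bd a).card : ℝ) = N := by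
        rw [hN]; exact_mod_cast h1
      linarith
    have hGa' : ((3:ℝ)/5) * N ≤ ((A \ Bd a').card : ℝ) := by
      have h1 : (A \ Bd a').card + (Bd a').card = A.card :=
        Finset.card_sdiff_add_card_eq_card (Finset.filter_subset _ _)
      have h2 : ((A \ Bd a').card : ℝ) + ((Bd a').card : ℝ) = N := by
        rw [hN]; exact_mod_cast h1
      linarith
    have hinter : (0:ℝ) < (((A \ Bd a) ∩ (A \ Bd a')).card : ℝ) := by
      have h3 := Finset.card_union_add_card_inter (A \ Bd a) (A \ Bd a')
      have h4 : ((A \ Bd a) ∪ (A \ Bd a')).card ≤ A.card := by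
        apply Finset.card_le_card
        intro x hx
        rcases Finset.mem_union.1 hx with h | h
        · exact (Finset.mem_sdiff.mp h).1
        · exact (Finset.mem_sdiff.mp h).1
      have h5 : (((A \ Bd a) ∪ (A \ Bd a')).card : ℝ) + (((A \ Bd a) ∩ (A \ Bd a')).card : ℝ)
          = ((A \ Bd a).card : ℝ) + ((A \ Bd a').card : ℝ) := by exact_mod_cast h3
      have h6 : (((A \ Bd a) ∪ (A \ Bd a')).card : ℝ) ≤ N := by rw [hN]; exact_mod_cast h4
      linarith
    obtain ⟨b, hb⟩ := Finset.card_pos.mp (by exact_mod_cast hinter)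
    obtain ⟨hb1, hb2⟩ := Finset.mem_inter.mp hb
    obtain ⟨hbA, hbn1⟩ := Finset.mem_sdiff.mp hb1
    obtain ⟨_, hbn2⟩ := Finset.mem_sdiff.mp hb2
    have hr1 : (1 - s) * N ≤ (rA A (b - a) : ℝ) := by
      by_contra h
      exact hbn1 (Finset.mem_filter.mpr ⟨hbA, not_le.mp h⟩)
    have hr2 : (1 - s) * N ≤ (rA A (b - a') : ℝ) := by
      by_contra h
      exact hbn2 (Finset.mem_filter.mpr ⟨hbA, not_le.mp h⟩)
    have htr := rA_triangle A (b - a') (b - a)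
    rw [sub_sub_sub_cancel_left] at htr
    have htr' : (rA A (b - a') : ℝ) + (rA A (b - a) : ℝ) ≤ (rA A (a - a') : ℝ) + N := by
      rw [hN]; exact_mod_cast htr
    linarith
  -- Step E : H = A' - A'
  set H : Finset G := A' - A' with hHdef
  have hmemH : ∀ {a b : G}, a ∈ A' → b ∈ A' → a - b ∈ H := by
    intro a b ha hb
    exact Finset.sub_mem_sub ha hb
  have hHr : ∀ d ∈ H, (1 - 2*s) * N ≤ (rA A d : ℝ) := by
    intro d hd
    obtain ⟨a, ha, b, hb, rfl⟩ := Finset.mem_sub.mp hd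
    exact hpair a ha b hb
  -- Step F : H is closed under subtraction
  have hclose : ∀ d1 ∈ H, ∀ d2 ∈ H, d1 - d2 ∈ H := by
    intro d1 hd1 d2 hd2
    obtain ⟨a, ha, b, hb, rfl⟩ := Finset.mem_sub.mp hd1
    obtain ⟨c, hc, e, he, rfl⟩ := Finset.mem_sub.mp hd2
    have h1 := hpair a ha c hc
    have h2 := hpair b hb e he
    have htr := rA_triangle A (a - c) (b - e)
    have heq : (a - c) - (b - e) = (a - b) - (c - e) := by abel
    rw [heq] at htr
    set d := (a - b) - (c - e) with hd
    have htr' : (rA A (a - c) : ℝ) + (rA A (b - e) : ℝ) ≤ (rA A d : ℝ) + N := by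
      rw [hN]; exact_mod_cast htr
    have hrd : (1 - 4*s) * N ≤ (rA A d : ℝ) := by linarith
    set T := A'.filter (fun x => x - d ∈ A') with hT
    have hsubset : A.filter (fun x => x - d ∈ A) ⊆
        T ∪ ((A \ A') ∪ (A \ A').image (· + d)) := by
      intro x hx
      obtain ⟨hxA, hxd⟩ := Finset.mem_filter.mp hx
      by_cases hx1 : x ∈ A'
      · by_cases hx2 : x - d ∈ A'
        · exact Finset.mem_union_left _ (Finset.mem_filter.mpr ⟨hx1, hx2⟩)
        · refine Finset.mem_union_right _ (Finset.mem_union_right _ ?_)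
          refine Finset.mem_image.mpr ⟨x - d, Finset.mem_sdiff.mpr ⟨hxd, hx2⟩, ?_⟩
          abel
      · exact Finset.mem_union_right _
          (Finset.mem_union_left _ (Finset.mem_sdiff.mpr ⟨hxA, hx1⟩))
    have hcards : (rA A d : ℝ) ≤ (T.card : ℝ) + 2 * ((A \ A').card : ℝ) := by
      have h3 := Finset.card_le_card hsubset
      have h4 := Finset.card_union_le T ((A \ A') ∪ (A \ A').image (· + d))
      have h5 := Finset.card_union_le (A \ A') ((A \ A').image (· + d))
      have h6 := Finset.card_image_le (s := A \ A') (f := (· + d))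
      have : rA A d ≤ T.card + ((A \ A').card + (A \ A').card) := by
        calc rA A d ≤ (T ∪ ((A \ A') ∪ (A \ A').image (· + d))).card := h3
          _ ≤ T.card + ((A \ A') ∪ (A \ A').image (· + d)).card := h4
          _ ≤ T.card + ((A \ A').card + ((A \ A').image (· + d)).card) := by omega
          _ ≤ T.card + ((A \ A').card + (A \ A').card) := by omega
      have h7 : ((rA A d : ℕ) : ℝ) ≤ ((T.card + ((A \ A').card + (A \ A').card) : ℕ) : ℝ) :=
        Nat.cast_le.mpr this
      push_cast at h7
      linarith
    have hsN' : s * N ≤ (1/10) * N := mul_le_mul_of_nonneg_right hs10 (le_of_lt hN0)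
    have hTpos : (0:ℝ) < (T.card : ℝ) := by linarith [hcards, hrd, hsd, hsN', hn1]
    obtain ⟨x, hx⟩ := Finset.card_pos.mp (by exact_mod_cast hTpos)
    obtain ⟨hx1, hx2⟩ := Finset.mem_filter.mp hx
    have hmem := hmemH hx1 hx2
    rwa [sub_sub_cancel] at hmem
  -- Step G : H is (the carrier of) a subgroup
  obtain ⟨a₀, ha₀⟩ := hA'ne
  have h0H : (0:G) ∈ H := by
    have := hmemH ha₀ ha₀
    rwa [sub_self] at this
  set H₀ : AddSubgroup G :=
    { carrier := (H : Set G)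
      zero_mem' := Finset.mem_coe.mpr h0H
      add_mem' := by
        intro x y hx hy
        have h1 : (0:G) - y ∈ H := hclose 0 h0H y (Finset.mem_coe.mp hy)
        have h2 := hclose x (Finset.mem_coe.mp hx) (0 - y) h1
        have h3 : x - (0 - y) = x + y := by abel
        rw [h3] at h2
        exact Finset.mem_coe.mpr h2
      neg_mem' := by
        intro x hx
        have h2 := hclose 0 h0H x (Finset.mem_coe.mp hx)
        rw [zero_sub] at h2
        exact Finset.mem_coe.mpr h2 } with hH₀
  set Hc : Finset G := H.image (a₀ + ·) with hHc
  refine ⟨Hc, ⟨a₀, H₀, ?_⟩, ?_, ?_⟩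
  · rw [hHc, Finset.coe_image]
    rfl
  · -- first bound
    have hsubA' : A' ⊆ A ∩ Hc := by
      intro a ha
      rw [Finset.mem_inter]
      refine ⟨hA'sub ha, ?_⟩
      rw [hHc, Finset.mem_image]
      exact ⟨a - a₀, hmemH ha ha₀, by abel⟩
    have hcap : (1 - (5/2)*s) * N ≤ ((A ∩ Hc).card : ℝ) := by
      refine hA'card.trans ?_
      exact_mod_cast Finset.card_le_card hsubA'
    have hsN' : 0 ≤ s * N := mul_nonneg hs0 (le_of_lt hN0)
    linarith
  · -- second bound
    have hsubA' : A' ⊆ A ∩ Hc := by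
      intro a ha
      rw [Finset.mem_inter]
      refine ⟨hA'sub ha, ?_⟩
      rw [hHc, Finset.mem_image]
      exact ⟨a - a₀, hmemH ha ha₀, by abel⟩
    have hcap : (1 - (5/2)*s) * N ≤ ((A ∩ Hc).card : ℝ) := by
      refine hA'card.trans ?_
      exact_mod_cast Finset.card_le_card hsubA'
    have hHcard : Hc.card = H.card := by
      rw [hHc]
      exact Finset.card_image_of_injective _ (add_right_injective a₀)
    -- ∑_{d ∈ H} rA A d ≤ N², each term at least (1-2s)N
    have hsum : (H.card : ℝ) * ((1 - 2*s) * N) ≤ N * N := by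
      have h1 : ∑ d ∈ H, ((1 - 2*s) * N) ≤ ∑ d ∈ H, (rA A d : ℝ) :=
        Finset.sum_le_sum hHr
      have h2 : (∑ d ∈ H, (rA A d : ℝ)) ≤ N * N := by
        have h3 := sum_rA_le A H
        have h4 : ((∑ d ∈ H, rA A d : ℕ) : ℝ) ≤ ((A.card * A.card : ℕ) : ℝ) :=
          Nat.cast_le.mpr h3
        push_cast at h4
        rw [hN]
        exact h4
      have h5 : ∑ d ∈ H, ((1 - 2*s) * N) = (H.card : ℝ) * ((1 - 2*s) * N) := by
        rw [Finset.sum_const, nsmul_eq_mul]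
      linarith
    have hx1 : (1 - 2*s) * (H.card : ℝ) ≤ N := by
      have h6 : ((1 - 2*s) * (H.card : ℝ)) * N ≤ N * N := by nlinarith [hsum]
      exact le_of_mul_le_mul_right h6 hN0
    have hx0 : (0:ℝ) ≤ (H.card : ℝ) := Nat.cast_nonneg _
    rw [hHcard]
    nlinarith [hcap, hx1, hx0, hs0, hs10, hn1,
      mul_le_mul_of_nonneg_left hx1 (show (0:ℝ) ≤ 1 - (5/2)*s by linarith),
      mul_nonneg hs0 hx0, mul_nonneg (mul_nonneg hs0 hs0) hx0]
end

section
/- Let Q be a symmetric convex body about the origin in R^d and φ: Z^d → G a group homomorphism to an abelian group G, and let M = φ(Q ∩ Z^d) be finite. Then |M + M| ≤ 5^d |M|. -/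
open Pointwise

theorem convex_progression_doubling {G : Type*} [AddCommGroup G] [DecidableEq G]
    (d : ℕ) (Q : Set (Fin d → ℝ))
    (hconv : Convex ℝ Q) (hcomp : IsCompact Q) (hsymm : Q = -Q)
    (φ : (Fin d → ℤ) →+ G) (M : Finset G)
    (hM : (M : Set G) = φ '' {v : Fin d → ℤ | (fun i => (v i : ℝ)) ∈ Q}) :
    ((M + M).card : ℝ) ≤ 5 ^ d * M.card := by
  classical
  set A : Set (Fin d → ℤ) := {v : Fin d → ℤ | (fun i => (v i : ℝ)) ∈ Q} with hA
  -- Q is closed under averages of four points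
  have havg : ∀ q1 ∈ Q, ∀ q2 ∈ Q, ∀ q3 ∈ Q, ∀ q4 ∈ Q,
      (4⁻¹ : ℝ) • (q1 + q2 + q3 + q4) ∈ Q := by
    intro q1 h1 q2 h2 q3 h3 q4 h4
    have m1 : (2⁻¹:ℝ) • q1 + (2⁻¹:ℝ) • q2 ∈ Q :=
      hconv h1 h2 (by norm_num) (by norm_num) (by norm_num)
    have m2 : (2⁻¹:ℝ) • q3 + (2⁻¹:ℝ) • q4 ∈ Q :=
      hconv h3 h4 (by norm_num) (by norm_num) (by norm_num)
    have hfin := hconv m1 m2 (by norm_num : (0:ℝ) ≤ 2⁻¹) (by norm_num : (0:ℝ) ≤ 2⁻¹)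
      (by norm_num)
    convert hfin using 1
    module
  set ρ : (Fin d → ℤ) → (Fin d → ZMod 4) := fun v i => (v i : ZMod 4) with hρ
  set T : Set (Fin d → ℤ) := {w | ∃ a ∈ A, ∃ b ∈ A, w = a + b} with hT
  -- key subtraction lemma
  have hkey : ∀ v ∈ T, ∀ w ∈ T, ρ v = ρ w → ∃ u ∈ A, w = v + (u + u + u + u) := by
    rintro v ⟨a, ha, b, hb, rfl⟩ w ⟨c, hc, e, he, rfl⟩ hvw
    set v := a + b
    set w := c + e
    have hdvd : ∀ i, (4:ℤ) ∣ w i - v i := by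
      intro i
      have h1 : ((v i : ZMod 4)) = (w i : ZMod 4) := congrFun hvw i
      have h2 : ((w i - v i : ℤ) : ZMod 4) = 0 := by push_cast; rw [← h1]; ring
      exact_mod_cast (ZMod.intCast_zmod_eq_zero_iff_dvd _ 4).mp h2
    refine ⟨fun i => (w i - v i) / 4, ?_, ?_⟩
    · -- u ∈ A
      have hq3 : -(fun i => (a i : ℝ)) ∈ Q := by
        rw [hsymm]
        simpa using (show (fun i => (a i : ℝ)) ∈ Q from ha)
      have hq4 : -(fun i => (b i : ℝ)) ∈ Q := by
        rw [hsymm]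
        simpa using (show (fun i => (b i : ℝ)) ∈ Q from hb)
      have hin := havg _ hc _ he _ hq3 _ hq4
      have heq : (fun i => (((w i - v i) / 4 : ℤ) : ℝ)) =
          (4⁻¹ : ℝ) • ((fun i => (c i : ℝ)) + (fun i => (e i : ℝ)) +
            -(fun i => (a i : ℝ)) + -(fun i => (b i : ℝ))) := by
        funext i
        obtain ⟨k, hk⟩ := hdvd i
        have h4 : ((w i - v i) / 4 : ℤ) = k := by omega
        have hwi : (w i : ℝ) - (v i : ℝ) = 4 * (k : ℝ) := by
          exact_mod_cast congrArg (Int.cast : ℤ → ℝ) hk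
        have hv' : (v i : ℝ) = (a i : ℝ) + (b i : ℝ) := by
          show ((a + b) i : ℝ) = _; push_cast [Pi.add_apply]; ring
        have hw' : (w i : ℝ) = (c i : ℝ) + (e i : ℝ) := by
          show ((c + e) i : ℝ) = _; push_cast [Pi.add_apply]; ring
        simp only [Pi.smul_apply, Pi.add_apply, Pi.neg_apply, smul_eq_mul, h4]
        rw [hv', hw'] at hwi
        linarith
      show (fun i => (((w i - v i) / 4 : ℤ) : ℝ)) ∈ Q
      rw [heq]; exact hin
    · funext i
      obtain ⟨k, hk⟩ := hdvd i
      have h4 : ((w i - v i) / 4 : ℤ) = k := by omega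
      simp only [Pi.add_apply, h4]
      omega
  -- membership transfer
  have hMmem : ∀ g, g ∈ M ↔ ∃ v ∈ A, φ v = g := by
    intro g
    constructor
    · intro hg
      have : g ∈ (M : Set G) := hg
      rw [hM] at this
      obtain ⟨v, hv, rfl⟩ := this
      exact ⟨v, hv, rfl⟩
    · rintro ⟨v, hv, rfl⟩
      have : φ v ∈ (M : Set G) := by rw [hM]; exact ⟨v, hv, rfl⟩
      exact this
  let vr : (Fin d → ZMod 4) → (Fin d → ℤ) :=
    fun r => if h : ∃ v ∈ T, ρ v = r then h.choose else 0
  have hsub : M + M ⊆ Finset.univ.biUnion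
      (fun r : Fin d → ZMod 4 => M.image (fun g => φ (vr r) + (g + g + g + g))) := by
    intro x hx
    obtain ⟨a, ha, b, hb, rfl⟩ := Finset.mem_add.mp hx
    obtain ⟨va, hva, rfl⟩ := (hMmem a).mp ha
    obtain ⟨vb, hvb, rfl⟩ := (hMmem b).mp hb
    set w := va + vb with hw
    have hwT : w ∈ T := ⟨va, hva, vb, hvb, rfl⟩
    have hex : ∃ v ∈ T, ρ v = ρ w := ⟨w, hwT, rfl⟩
    have hvr : vr (ρ w) ∈ T ∧ ρ (vr (ρ w)) = ρ w := by
      simp only [vr, dif_pos hex]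
      exact ⟨hex.choose_spec.1, hex.choose_spec.2⟩
    obtain ⟨u, huA, hwu⟩ := hkey (vr (ρ w)) hvr.1 w hwT hvr.2
    refine Finset.mem_biUnion.mpr ⟨ρ w, Finset.mem_univ _, Finset.mem_image.mpr
      ⟨φ u, (hMmem _).mpr ⟨u, huA, rfl⟩, ?_⟩⟩
    have h1 : φ va + φ vb = φ w := (map_add φ va vb).symm
    have h2 : φ w = φ (vr (ρ w)) + (φ u + φ u + φ u + φ u) := by
      nth_rewrite 1 [hwu]; simp [map_add]
    show φ (vr (ρ w)) + (φ u + φ u + φ u + φ u) = φ va + φ vb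
    rw [h1, h2]
  have hcard : (M + M).card ≤ 4 ^ d * M.card := by
    calc (M + M).card ≤ (Finset.univ.biUnion
          (fun r : Fin d → ZMod 4 => M.image (fun g => φ (vr r) + (g + g + g + g)))).card :=
        Finset.card_le_card hsub
      _ ≤ ∑ r : Fin d → ZMod 4, (M.image (fun g => φ (vr r) + (g + g + g + g))).card :=
        Finset.card_biUnion_le
      _ ≤ ∑ _r : Fin d → ZMod 4, M.card :=
        Finset.sum_le_sum fun r _ => Finset.card_image_le
      _ = 4 ^ d * M.card := by
        simp [Finset.sum_const, Finset.card_univ]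
  calc ((M + M).card : ℝ) ≤ (4:ℝ) ^ d * M.card := by exact_mod_cast hcard
    _ ≤ 5 ^ d * M.card := by
      have h4 : (4:ℝ) ^ d ≤ 5 ^ d := pow_le_pow_left₀ (by norm_num) (by norm_num) d
      have : (0:ℝ) ≤ (M.card : ℝ) := by exact Nat.cast_nonneg _
      nlinarith
end

section
/- Let M be a finite subset of an abelian group with |M + M| ≤ C|M|, and let A be a finite set with |A ∩ M| ≥ η|A| and |A ∩ M| ≥ ε|M|. Then E(A) ≥ ε η^3 C^{-1} |A|^3. -/
open Pointwise

open Finset in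
lemma energyE_eq_addEnergy {G : Type*} [AddCommGroup G] [DecidableEq G] (A : Finset G) :
    energyE A = Finset.addEnergy A A := by
  unfold energyE Finset.addEnergy
  refine Finset.card_nbij' (fun t => ((t.1, t.2.2), (t.2.1, t.1 + t.2.1 - t.2.2)))
    (fun q => (q.1.1, q.2.1, q.1.2)) ?_ ?_ ?_ ?_
  · rintro ⟨x, y, z⟩ ht
    simp only [Finset.mem_coe, Finset.mem_filter, Finset.mem_product] at ht ⊢
    refine ⟨⟨⟨ht.1.1, ht.1.2.2⟩, ht.1.2.1, ht.2⟩, ?_⟩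
    abel
  · rintro ⟨⟨a₁, a₂⟩, b₁, b₂⟩ hq
    simp only [Finset.mem_coe, Finset.mem_filter, Finset.mem_product] at hq ⊢
    refine ⟨⟨hq.1.1.1, hq.1.2.1, hq.1.1.2⟩, ?_⟩
    have h : a₁ + b₁ - a₂ = b₂ := by rw [hq.2]; abel
    rw [h]; exact hq.1.2.2
  · rintro ⟨x, y, z⟩ _; rfl
  · rintro ⟨⟨a₁, a₂⟩, b₁, b₂⟩ hq
    simp only [Finset.mem_coe, Finset.mem_filter, Finset.mem_product] at hq
    simp only [Prod.mk.injEq, true_and, and_true]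
    rw [hq.2]; abel

theorem energy_of_intersection_with_small_doubling {G : Type*} [AddCommGroup G] [DecidableEq G]
    (A M : Finset G) (C : ℝ) (hC : 0 < C) (hM : ((M + M).card : ℝ) ≤ C * M.card)
    (η ε : ℝ) (hη : 0 < η) (hη' : η ≤ 1) (hε : 0 < ε) (hε' : ε ≤ 1)
    (h1 : η * A.card ≤ ((A ∩ M).card : ℝ)) (h2 : ε * M.card ≤ ((A ∩ M).card : ℝ)) :
    ε * η ^ 3 * C⁻¹ * (A.card : ℝ) ^ 3 ≤ energyE A := by
  set B := A ∩ M with hB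
  set a : ℝ := (A.card : ℝ)
  set m : ℝ := (M.card : ℝ)
  set b : ℝ := (B.card : ℝ)
  have ha : 0 ≤ a := Nat.cast_nonneg _
  have hm0 : 0 ≤ m := Nat.cast_nonneg _
  have hEA : (0 : ℝ) ≤ (energyE A : ℝ) := Nat.cast_nonneg _
  rcases eq_or_lt_of_le hm0 with hm | hm
  · -- M empty, so B empty, so a = 0
    have hMe : M = ∅ := Finset.card_eq_zero.1 (by simp only [m] at hm; exact_mod_cast hm.symm)
    have hBe : b = 0 := by simp [hB, hMe, b]
    have ha0 : a = 0 := by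
      have := h1
      rw [hBe] at this
      nlinarith
    rw [ha0]
    simpa using hEA
  -- key Cauchy-Schwarz bound
  have hmono : (Finset.addEnergy B B : ℝ) ≤ (energyE A : ℝ) := by
    rw [energyE_eq_addEnergy]
    exact_mod_cast Finset.addEnergy_mono Finset.inter_subset_left Finset.inter_subset_left
  have hBB : ((B + B).card : ℝ) ≤ C * m := by
    refine le_trans ?_ hM
    exact_mod_cast Finset.card_le_card
      (Finset.add_subset_add Finset.inter_subset_right Finset.inter_subset_right)
  have hcs : b ^ 2 * b ^ 2 ≤ ((B + B).card : ℝ) * (Finset.addEnergy B B : ℝ) := by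
    have := Finset.le_card_add_mul_addEnergy B B
    push_cast [b]
    exact_mod_cast this
  have hE0 : (0 : ℝ) ≤ (Finset.addEnergy B B : ℝ) := Nat.cast_nonneg _
  have hBB0 : (0 : ℝ) ≤ ((B + B).card : ℝ) := Nat.cast_nonneg _
  have key : b ^ 2 * b ^ 2 ≤ (C * m) * (energyE A : ℝ) :=
    hcs.trans (mul_le_mul hBB hmono hE0 (by positivity))
  have hηa : 0 ≤ η * a := by positivity
  have hεm : 0 ≤ ε * m := by positivity
  have hb4 : (η * a) ^ 3 * (ε * m) ≤ b ^ 2 * b ^ 2 := by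
    have h3 : (η * a) ^ 3 ≤ b ^ 3 := pow_le_pow_left₀ hηa h1 3
    have hb0 : 0 ≤ b := le_trans hηa h1
    calc (η * a) ^ 3 * (ε * m) ≤ b ^ 3 * b := mul_le_mul h3 h2 hεm (by positivity)
      _ = b ^ 2 * b ^ 2 := by ring
  have main : ε * η ^ 3 * a ^ 3 * m ≤ (C * m) * (energyE A : ℝ) := by
    calc ε * η ^ 3 * a ^ 3 * m = (η * a) ^ 3 * (ε * m) := by ring
      _ ≤ _ := hb4.trans key
  have main2 : ε * η ^ 3 * a ^ 3 ≤ C * (energyE A : ℝ) := by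
    have := (mul_le_mul_iff_of_pos_right hm).1 (by linarith [main] : ε * η ^ 3 * a ^ 3 * m ≤ C * (energyE A : ℝ) * m)
    exact this
  rw [mul_comm ε (η ^ 3)] at main2 ⊢
  calc η ^ 3 * ε * C⁻¹ * a ^ 3 = (η ^ 3 * ε * a ^ 3) / C := by field_simp
    _ ≤ (energyE A : ℝ) := (div_le_iff₀ hC).2 (by linarith)
end

section
/- Let A be a finite nonempty subset of an abelian group with |A + A| ≤ K|A|. Then |nA| ≤ K^n |A| for all integers n ≥ 1. -/
open Pointwise

theorem plunnecke {G : Type*} [AddCommGroup G] [DecidableEq G]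
    (A : Finset G) (hA : A.Nonempty) (K : ℝ) (hK : ((A + A).card : ℝ) ≤ K * A.card) :
    ∀ n : ℕ, 1 ≤ n → ((n • A).card : ℝ) ≤ K ^ n * A.card := by
  intro n _
  have hA0 : (0 : ℝ) < A.card := by exact_mod_cast hA.card_pos
  have h := Finset.pluennecke_ruzsa_inequality_nsmul_add hA A n
  have h' : ((n • A).card : ℝ) ≤ ((A + A).card / A.card) ^ n * A.card := by
    have := (NNRat.cast_le (K := ℝ)).2 h
    push_cast at this
    exact this
  refine h'.trans ?_
  have hbase : ((A + A).card : ℝ) / A.card ≤ K := by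
    rw [div_le_iff₀ hA0]; exact hK
  have hb0 : (0 : ℝ) ≤ ((A + A).card : ℝ) / A.card := by positivity
  gcongr
end

section
/- Let A, A'' be finite subsets of an abelian group G. Then for every x ∈ G, |(A + A'') ∩ (x + A + A'')| ≥ |A + (A'' ∩ (x + A''))|. -/
open Pointwise

theorem katz_koester {G : Type*} [AddCommGroup G] [DecidableEq G]
    (A A'' : Finset G) (x : G) :
    ((A + (A'' ∩ A''.image (x + ·))).card : ℝ) ≤
      (((A + A'') ∩ (A + A'').image (x + ·)).card : ℝ) := by
  have h : (A + (A'' ∩ A''.image (x + ·))) ⊆ ((A + A'') ∩ (A + A'').image (x + ·)) := by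
    intro y hy
    obtain ⟨a, ha, b, hb, rfl⟩ := Finset.mem_add.1 hy
    rw [Finset.mem_inter] at hb
    obtain ⟨hb1, hb2⟩ := hb
    obtain ⟨b', hb', rfl⟩ := Finset.mem_image.1 hb2
    refine Finset.mem_inter.2 ⟨Finset.add_mem_add ha hb1, Finset.mem_image.2 ⟨a + b', Finset.add_mem_add ha hb', by abel⟩⟩
  exact_mod_cast Finset.card_le_card h
end

section
/- Let A be a finite nonempty subset of an abelian group G with |A+A| ≤ K|A| (K ≥ 1), let f ∈ ℓ^2(G) be finitely supported, and let ε ∈ (0,1]. Then there exists a set X ⊆ G with |X| ≥ (2K)^{-C ε^{-2}} |A| for an absolute constant C, such that ‖τ_x(f * μ_A) - f * μ_A‖_{ℓ^2} ≤ ε ‖f‖_{ℓ^2} for all x ∈ X. -/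
open Pointwise

/-- Convolution of two functions on a (discrete) abelian group. -/
noncomputable def conv {G : Type*} [AddCommGroup G] (f g : G → ℝ) : G → ℝ :=
  fun x => ∑' y, f y * g (x - y)

/-- Translation: `τ_x f (y) = f (y + x)`. -/
def tau {G : Type*} [AddCommGroup G] (x : G) (f : G → ℝ) : G → ℝ :=
  fun y => f (y + x)

/-- Normalised indicator measure `μ_A = 1_A / |A|`. -/
noncomputable def muF {G : Type*} [DecidableEq G] (A : Finset G) : G → ℝ :=
  fun x => if x ∈ A then ((A.card : ℝ))⁻¹ else 0

/-- The `ℓ²(G)` norm (with counting measure). -/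
noncomputable def l2norm {G : Type*} (f : G → ℝ) : ℝ :=
  Real.sqrt (∑' y, (f y) ^ 2)

set_option maxHeartbeats 1600000

namespace CSaux

variable {G : Type} [AddCommGroup G] [DecidableEq G]

lemma l2norm_eq_sum (s : Finset G) (f : G → ℝ) (h : ∀ y ∉ s, f y = 0) :
    l2norm f = Real.sqrt (∑ y ∈ s, f y ^ 2) := by
  rw [l2norm, tsum_eq_sum (s := s) (fun y hy => by rw [h y hy]; ring)]

noncomputable def toE (s : Finset G) (f : G → ℝ) : EuclideanSpace ℝ s := WithLp.toLp 2 (fun i => f i)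

lemma l2norm_eq_norm_toE (s : Finset G) (f : G → ℝ) (h : ∀ y ∉ s, f y = 0) :
    l2norm f = ‖toE s f‖ := by
  rw [l2norm_eq_sum s f h, EuclideanSpace.norm_eq]
  congr 1
  rw [← Finset.sum_coe_sort]
  exact Finset.sum_congr rfl fun i _ => by rw [Real.norm_eq_abs, sq_abs]; rfl

lemma l2norm_add_le (s : Finset G) (p q : G → ℝ) (hp : ∀ y ∉ s, p y = 0)
    (hq : ∀ y ∉ s, q y = 0) : l2norm (p + q) ≤ l2norm p + l2norm q := by
  rw [l2norm_eq_norm_toE s p hp, l2norm_eq_norm_toE s q hq,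
    l2norm_eq_norm_toE s (p + q) (fun y hy => by simp [Pi.add_apply, hp y hy, hq y hy])]
  have : toE s (p + q) = toE s p + toE s q := (WithLp.toLp_add 2 _ _).symm
  rw [this]
  exact norm_add_le _ _

lemma l2norm_tau (x : G) (f : G → ℝ) : l2norm (tau x f) = l2norm f := by
  unfold l2norm tau
  congr 1
  exact (Equiv.addRight x).tsum_eq (fun y => f y ^ 2)

lemma l2norm_sub_comm (p q : G → ℝ) : l2norm (p - q) = l2norm (q - p) := by
  unfold l2norm
  congr 1
  exact tsum_congr fun y => by simp only [Pi.sub_apply]; ring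

lemma conv_muF_eq (A : Finset G) (f : G → ℝ) (x : G) :
    conv f (muF A) x = (A.card : ℝ)⁻¹ * ∑ a ∈ A, f (x - a) := by
  unfold conv
  rw [← (Equiv.subLeft x).tsum_eq (fun y => f y * muF A (x - y))]
  simp only [Equiv.subLeft_apply, sub_sub_cancel]
  rw [tsum_eq_sum (s := A) (fun a ha => by simp [muF, ha])]
  rw [Finset.mul_sum]
  exact Finset.sum_congr rfl fun a ha => by simp [muF, ha, mul_comm]

lemma var_sum (A : Finset G) (h : G → ℝ) (h0 : ∑ a ∈ A, h a = 0) (m : ℕ) :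
    (A.card : ℝ) * ∑ y : Fin m → ↥A, (∑ i, h (y i)) ^ 2
      = m * (A.card : ℝ) ^ m * ∑ a ∈ A, (h a) ^ 2 := by
  induction m with
  | zero => simp
  | succ m ih =>
    have hA0 : ∑ a : ↥A, h ↑a = 0 := by rw [Finset.sum_coe_sort]; exact h0
    have hcard : (Fintype.card (Fin m → ↥A) : ℝ) = (A.card : ℝ) ^ m := by
      simp [Fintype.card_fun, Fintype.card_coe]
    have split : ∑ y : Fin (m + 1) → ↥A, (∑ i, h (y i)) ^ 2
        = ∑ p : ↥A × (Fin m → ↥A), (h ↑p.1 + ∑ i, h ↑(p.2 i)) ^ 2 := by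
      rw [← Equiv.sum_comp (Fin.consEquiv (fun _ => ↥A)) (fun y => (∑ i, h ↑(y i)) ^ 2)]
      refine Finset.sum_congr rfl fun p _ => ?_
      congr 1
      rw [Fin.sum_univ_succ]
      simp [Fin.consEquiv]
    rw [split, Fintype.sum_prod_type]
    have expand : ∀ a : ↥A, ∑ y : Fin m → ↥A, (h ↑a + ∑ i, h ↑(y i)) ^ 2
        = (A.card : ℝ) ^ m * (h ↑a) ^ 2
          + 2 * h ↑a * (∑ y : Fin m → ↥A, ∑ i, h ↑(y i))
          + ∑ y : Fin m → ↥A, (∑ i, h ↑(y i)) ^ 2 := by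
      intro a
      simp only [add_sq]
      rw [Finset.sum_add_distrib, Finset.sum_add_distrib, Finset.sum_const,
        Finset.card_univ, ← Finset.mul_sum]
      rw [nsmul_eq_mul, hcard]
    simp only [expand]
    rw [Finset.sum_add_distrib, Finset.sum_add_distrib]
    have e1 : ∑ a : ↥A, (A.card : ℝ) ^ m * (h ↑a) ^ 2
        = (A.card : ℝ) ^ m * ∑ a ∈ A, (h a) ^ 2 := by
      rw [← Finset.mul_sum]
      exact congrArg _ (Finset.sum_coe_sort A (fun a => h a ^ 2))
    have e2 : ∑ a : ↥A, 2 * h ↑a * (∑ y : Fin m → ↥A, ∑ i, h ↑(y i)) = 0 := by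
      rw [← Finset.sum_mul]
      have : ∑ a : ↥A, 2 * h ↑a = 2 * ∑ a : ↥A, h ↑a := by rw [Finset.mul_sum]
      rw [this, hA0]
      ring
    have e3 : ∑ _a : ↥A, (∑ y : Fin m → ↥A, (∑ i, h ↑(y i)) ^ 2)
        = (A.card : ℝ) * ∑ y : Fin m → ↥A, (∑ i, h ↑(y i)) ^ 2 := by
      rw [Finset.sum_const, Finset.card_univ, Fintype.card_coe, nsmul_eq_mul]
    rw [e1, e2, e3, mul_add, mul_add, ih]
    push_cast
    ring

end CSaux
namespace CSaux

lemma main {G : Type} [AddCommGroup G] [DecidableEq G] (A : Finset G) (hA : A.Nonempty)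
    (K : ℝ) (hK : 1 ≤ K) (hAA : ((A + A).card : ℝ) ≤ K * A.card)
    (f : G → ℝ) (hf : (Function.support f).Finite) (ε : ℝ) (hε : 0 < ε) (hε1 : ε ≤ 1) :
    ∃ X : Finset G,
      (2 * K) ^ (-(20 * (ε⁻¹ ^ 2))) * A.card ≤ (X.card : ℝ) ∧
      ∀ x ∈ X, l2norm (tau x (conv f (muF A)) - conv f (muF A)) ≤ ε * l2norm f := by
  classical
  obtain ⟨a0, ha0⟩ := hA
  have hA : A.Nonempty := ⟨a0, ha0⟩
  set n := A.card with hn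
  have hn0 : 0 < n := hA.card_pos
  have hnR : (0:ℝ) < (n:ℝ) := by exact_mod_cast hn0
  have hK0 : (0:ℝ) < K := lt_of_lt_of_le one_pos hK
  have hε2 : (1:ℝ) ≤ ε⁻¹ ^ 2 := by
    have h1 : (1:ℝ) ≤ ε⁻¹ := one_le_inv_iff₀.mpr ⟨hε, hε1⟩
    nlinarith
  set m' := ⌈(8:ℝ) * ε⁻¹ ^ 2⌉₊ with hm'def
  set m := m' + 1 with hmdef
  have hm'ub : (m' : ℝ) ≤ 8 * ε⁻¹ ^ 2 + 1 := le_of_lt (Nat.ceil_lt_add_one (by positivity))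
  have hm8 : (8:ℝ) * ε⁻¹ ^ 2 ≤ (m:ℝ) := by
    have := Nat.le_ceil ((8:ℝ) * ε⁻¹ ^ 2)
    push_cast [hmdef]
    linarith
  have hm0R : (0:ℝ) < (m:ℝ) := by positivity
  clear_value m'
  set S := hf.toFinset with hS
  have hfS : ∀ y ∉ S, f y = 0 := by
    intro y hy
    by_contra hne
    exact hy (hf.mem_toFinset.mpr hne)
  set B := (S + A) ∪ (S + A + (A - A)) with hB
  set g := conv f (muF A) with hg
  have hgx : ∀ x, g x = (n:ℝ)⁻¹ * ∑ a ∈ A, f (x - a) := fun x => conv_muF_eq A f x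
  have hsum_g : ∀ t, ∑ a ∈ A, f (t - a) = (n:ℝ) * g t := by
    intro t
    rw [hgx]
    field_simp
  have hSA_B : ∀ t : G, t ∈ S + A → t ∈ B := fun t ht => Finset.mem_union_left _ ht
  have hshift_mem : ∀ (t a : G), a ∈ A → f (t - a) ≠ 0 → t ∈ S + A := by
    intro t a ha hne
    have h1 : t - a ∈ S := hf.mem_toFinset.mpr hne
    have h2 := Finset.add_mem_add h1 ha
    simpa using h2
  have hSAB2 : ∀ t : G, t ∈ S + A + (A - A) → t ∈ B := fun t ht =>
    Finset.mem_union_right _ ht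
  have hgsupp : ∀ t, t ∉ S + A → g t = 0 := by
    intro t ht
    rw [hgx]
    have hz : ∑ a ∈ A, f (t - a) = 0 := Finset.sum_eq_zero fun a ha => by
      by_contra hne
      exact ht (hshift_mem t a ha hne)
    rw [hz]
    ring
  clear_value g
  clear_value B
  set F2 := ∑ t ∈ S, f t ^ 2 with hF2
  have hF2nonneg : 0 ≤ F2 := Finset.sum_nonneg fun _ _ => sq_nonneg _
  have hl2f : l2norm f = Real.sqrt F2 := l2norm_eq_sum S f hfS
  set Gt : (Fin m → ↥A) → G → ℝ :=
    fun y t => (m:ℝ)⁻¹ * ∑ i, f (t - (y i : G)) with hGt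
  have hGtsupp : ∀ y t, t ∉ S + A → Gt y t = 0 := by
    intro y t ht
    have hz : ∑ i, f (t - (y i : G)) = 0 := Finset.sum_eq_zero fun i _ => by
      by_contra hne
      exact ht (hshift_mem t (y i) (y i).2 hne)
    show (m:ℝ)⁻¹ * ∑ i, f (t - (y i : G)) = 0
    rw [hz]
    ring
  clear_value S
  set val : (Fin m → ↥A) → ℝ := fun y => ∑ t ∈ B, (Gt y t - g t) ^ 2 with hval
  have hvalnonneg : ∀ y, 0 ≤ val y := fun y => Finset.sum_nonneg fun _ _ => sq_nonneg _
  have hl2val : ∀ y, l2norm (Gt y - g) = Real.sqrt (val y) := by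
    intro y
    rw [l2norm_eq_sum B _ (fun t ht => by
      have h1 : t ∉ S + A := fun h => ht (hSA_B t h)
      simp [Pi.sub_apply, hGtsupp y t h1, hgsupp t h1])]
    rfl
  have hshift_sum : ∀ a ∈ A, ∑ t ∈ B, f (t - a) ^ 2 ≤ F2 := by
    intro a ha
    have himg : ∑ u ∈ B.image (fun t => t - a), f u ^ 2 = ∑ t ∈ B, f (t - a) ^ 2 :=
      Finset.sum_image (f := fun u => f u ^ 2) (g := fun t => t - a) (fun x _ y _ h => by
        have h2 := congrArg (fun w => w + a) h
        simpa using h2)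
    rw [← himg]
    have h1 : ∑ u ∈ B.image (fun t => t - a), f u ^ 2
        = ∑ u ∈ (B.image (fun t => t - a)) ∩ S, f u ^ 2 := by
      refine (Finset.sum_subset Finset.inter_subset_left ?_).symm
      intro u hu hnu
      have hus : u ∉ S := fun hS' => hnu (Finset.mem_inter.mpr ⟨hu, hS'⟩)
      rw [hfS u hus]
      ring
    rw [h1]
    exact Finset.sum_le_sum_of_subset_of_nonneg Finset.inter_subset_right
      (fun u _ _ => sq_nonneg _)
  have hvar : ∑ y : Fin m → ↥A, val y ≤ (n:ℝ) ^ m * F2 / m := by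
    have key : ∀ t ∈ B, ∑ y : Fin m → ↥A, (Gt y t - g t) ^ 2
        ≤ (n:ℝ) ^ m / ((m:ℝ) * n) * ∑ a ∈ A, f (t - a) ^ 2 := by
      intro t _
      set h : G → ℝ := fun a => f (t - a) - g t with hh
      have h0 : ∑ a ∈ A, h a = 0 := by
        simp only [hh]
        rw [Finset.sum_sub_distrib, Finset.sum_const, nsmul_eq_mul, hsum_g t]
        ring
      have hident : ∀ y : Fin m → ↥A, Gt y t - g t = (m:ℝ)⁻¹ * ∑ i, h (y i) := by
        intro y
        show (m:ℝ)⁻¹ * ∑ i, f (t - (y i : G)) - g t = (m:ℝ)⁻¹ * ∑ i, h ((y i : G))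
        simp only [hh]
        rw [Finset.sum_sub_distrib, Finset.sum_const, Finset.card_univ,
          Fintype.card_fin, nsmul_eq_mul, mul_sub]
        congr 1
        field_simp
      have hE : ∑ a ∈ A, h a ^ 2 = ∑ a ∈ A, f (t - a) ^ 2 - n * g t ^ 2 := by
        have hexp : ∀ a ∈ A, h a ^ 2
            = f (t - a) ^ 2 - (2 * g t) * f (t - a) + g t ^ 2 := fun a _ => by
          simp only [hh]; ring
        rw [Finset.sum_congr rfl hexp, Finset.sum_add_distrib, Finset.sum_sub_distrib,
          ← Finset.mul_sum, hsum_g t, Finset.sum_const, nsmul_eq_mul]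
        ring
      have hV := var_sum A h h0 m
      have hcalc : ∑ y : Fin m → ↥A, (Gt y t - g t) ^ 2
          = (m:ℝ)⁻¹ ^ 2 * ∑ y : Fin m → ↥A, (∑ i, h ((y i : G))) ^ 2 := by
        rw [Finset.mul_sum]
        refine Finset.sum_congr rfl fun y _ => ?_
        rw [hident y, mul_pow]
      rw [hcalc]
      have hsum : ∑ y : Fin m → ↥A, (∑ i, h ((y i : G))) ^ 2
          = (m:ℝ) * (n:ℝ) ^ m * (∑ a ∈ A, h a ^ 2) / n := by
        rw [eq_div_iff (ne_of_gt hnR)]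
        linear_combination hV
      rw [hsum]
      have hcoeff : (m:ℝ)⁻¹ ^ 2 * ((m:ℝ) * (n:ℝ) ^ m * (∑ a ∈ A, h a ^ 2) / n)
          = (n:ℝ) ^ m / ((m:ℝ) * n) * (∑ a ∈ A, h a ^ 2) := by
        field_simp
      rw [hcoeff]
      apply mul_le_mul_of_nonneg_left _ (div_nonneg (pow_nonneg hnR.le _) (mul_nonneg hm0R.le hnR.le))
      rw [hE]
      nlinarith [sq_nonneg (g t), hnR]
    have hswap : ∑ y : Fin m → ↥A, val y
        = ∑ t ∈ B, ∑ y : Fin m → ↥A, (Gt y t - g t) ^ 2 := by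
      simp only [hval]
      exact Finset.sum_comm
    rw [hswap]
    calc ∑ t ∈ B, ∑ y : Fin m → ↥A, (Gt y t - g t) ^ 2
        ≤ ∑ t ∈ B, (n:ℝ) ^ m / ((m:ℝ) * n) * ∑ a ∈ A, f (t - a) ^ 2 :=
          Finset.sum_le_sum key
      _ = (n:ℝ) ^ m / ((m:ℝ) * n) * ∑ a ∈ A, ∑ t ∈ B, f (t - a) ^ 2 := by
          rw [← Finset.mul_sum, Finset.sum_comm]
      _ ≤ (n:ℝ) ^ m / ((m:ℝ) * n) * ∑ _a ∈ A, F2 := by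
          apply mul_le_mul_of_nonneg_left _ (div_nonneg (pow_nonneg hnR.le _) (mul_nonneg hm0R.le hnR.le))
          exact Finset.sum_le_sum hshift_sum
      _ = (n:ℝ) ^ m * F2 / m := by
          rw [Finset.sum_const, nsmul_eq_mul]
          field_simp
          ring
  set L := Finset.univ.filter (fun y : Fin m → ↥A => val y ≤ 2 * F2 / m) with hL
  have hunivcard : ((Finset.univ : Finset (Fin m → ↥A)).card : ℝ) = (n:ℝ) ^ m := by
    rw [Finset.card_univ, hn]
    simp [Fintype.card_fun, Fintype.card_coe]
  have hcardL : (n:ℝ) ^ m / 2 ≤ (L.card : ℝ) := by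
    by_cases hF2z : F2 = 0
    · have hLuniv : L = Finset.univ := by
        rw [hL, Finset.filter_true_of_mem]
        intro y _
        have h1 : val y ≤ ∑ y' : Fin m → ↥A, val y' :=
          Finset.single_le_sum (fun y' _ => hvalnonneg y') (Finset.mem_univ y)
        have h2 : ∑ y' : Fin m → ↥A, val y' ≤ 0 := by
          have h3 := hvar
          rw [hF2z] at h3
          simpa using h3
        rw [hF2z]
        have : val y ≤ 0 := le_trans h1 h2
        have h4 : (0:ℝ) ≤ 2 * 0 / m := by simp
        linarith
      rw [hLuniv, hunivcard]
      have h5 : (0:ℝ) ≤ (n:ℝ) ^ m := pow_nonneg hnR.le _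
      linarith
    · have hF2pos : 0 < F2 := lt_of_le_of_ne hF2nonneg (Ne.symm hF2z)
      set Lc := Finset.univ.filter (fun y : Fin m → ↥A => ¬ (val y ≤ 2 * F2 / m)) with hLc
      have hsplit : (L.card : ℝ) + (Lc.card : ℝ) = (n:ℝ) ^ m := by
        rw [← hunivcard]
        norm_cast
        rw [hL, hLc]
        exact Finset.card_filter_add_card_filter_not _
      have hLcsum : (Lc.card : ℝ) * (2 * F2 / m) ≤ ∑ y : Fin m → ↥A, val y := by
        calc (Lc.card : ℝ) * (2 * F2 / m) = ∑ _y ∈ Lc, (2 * F2 / m) := by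
              rw [Finset.sum_const, nsmul_eq_mul]
          _ ≤ ∑ y ∈ Lc, val y := Finset.sum_le_sum fun y hy => by
              have := (Finset.mem_filter.mp hy).2
              linarith [lt_of_not_ge this]
          _ ≤ ∑ y : Fin m → ↥A, val y :=
              Finset.sum_le_sum_of_subset_of_nonneg (Finset.filter_subset _ _)
                (fun y _ _ => hvalnonneg y)
      have hmain := le_trans hLcsum hvar
      have hLc2 : (Lc.card : ℝ) ≤ (n:ℝ) ^ m / 2 := by
        have hq : 0 < F2 / m := by positivity
        have h3 : (2 * (Lc.card:ℝ)) * (F2 / m) ≤ ((n:ℝ) ^ m) * (F2 / m) := by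
          calc (2 * (Lc.card:ℝ)) * (F2 / m) = (Lc.card:ℝ) * (2 * F2 / m) := by ring
            _ ≤ (n:ℝ) ^ m * F2 / m := hmain
            _ = ((n:ℝ) ^ m) * (F2 / m) := by ring
        have h4 := le_of_mul_le_mul_right h3 hq
        linarith
      linarith
  have hLbound : ∀ y ∈ L, l2norm (Gt y - g) ≤ ε / 2 * l2norm f := by
    intro y hy
    rw [hl2val y, hl2f]
    have h1 : val y ≤ 2 * F2 / m := (Finset.mem_filter.mp hy).2
    have h8 : (8:ℝ) ≤ ε ^ 2 * m := by
      have hmul := mul_le_mul_of_nonneg_left hm8 (le_of_lt (by positivity : (0:ℝ) < ε ^ 2))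
      calc (8:ℝ) = ε ^ 2 * (8 * ε⁻¹ ^ 2) := by field_simp
        _ ≤ ε ^ 2 * m := hmul
    have h2 : 2 * F2 / m ≤ ε ^ 2 / 4 * F2 := by
      rw [div_le_iff₀ hm0R]
      nlinarith [mul_nonneg (by linarith : (0:ℝ) ≤ ε ^ 2 * m - 8) hF2nonneg]
    have h3 := Real.sqrt_le_sqrt (le_trans h1 h2)
    refine le_trans h3 ?_
    have h4 : ε ^ 2 / 4 * F2 = (ε / 2) ^ 2 * F2 := by ring
    rw [h4, Real.sqrt_mul (by positivity) F2, Real.sqrt_sq (by positivity)]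
  set k : (Fin m → ↥A) → (Fin m' → G) := fun y i => ((y i.succ : G) - (y 0 : G)) with hk
  set T : Finset (Fin m' → G) := Fintype.piFinset (fun _ => A - A) with hT
  have hmapsto : ∀ y ∈ L, k y ∈ T := by
    intro y _
    rw [hT, Fintype.mem_piFinset]
    intro i
    exact Finset.sub_mem_sub (y i.succ).2 (y 0).2
  have hsubcard : (((A - A).card : ℝ)) ≤ K ^ 2 * n := by
    have hinq := Finset.ruzsa_triangle_inequality_sub_add_add A A A
    have hcast : ((A - A).card : ℝ) * n ≤ ((A + A).card : ℝ) * ((A + A).card : ℝ) := by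
      rw [hn]
      exact_mod_cast hinq
    nlinarith [hAA, hnR, (Nat.cast_nonneg (A + A).card : (0:ℝ) ≤ (A + A).card)]
  have hTcard : (T.card : ℝ) ≤ (K ^ 2 * n) ^ m' := by
    have hTc : T.card = (A - A).card ^ m' := by
      rw [hT, Fintype.card_piFinset]
      simp
    rw [hTc]
    push_cast
    exact pow_le_pow_left₀ (Nat.cast_nonneg _) hsubcard m'
  have hTne : T.Nonempty := ⟨fun _ => a0 - a0, by
    rw [hT, Fintype.mem_piFinset]; intro i; exact Finset.sub_mem_sub ha0 ha0⟩
  have hTposR : (0:ℝ) < T.card := by exact_mod_cast Finset.card_pos.mpr hTne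
  have hfib : ∃ d ∈ T, (L.card : ℝ) / T.card ≤ ((L.filter (fun y => k y = d)).card : ℝ) := by
    have hcount : L.card = ∑ d ∈ T, (L.filter (fun y => k y = d)).card :=
      Finset.card_eq_sum_card_fiberwise hmapsto
    refine Finset.exists_le_of_sum_le hTne ?_
    rw [Finset.sum_const, nsmul_eq_mul, mul_div_cancel₀ _ (ne_of_gt hTposR), hcount]
    push_cast
    exact le_refl _
  obtain ⟨d, hdT, hd⟩ := hfib
  set LD := L.filter (fun y => k y = d) with hLD
  have hLDcard : (n:ℝ) / (2 * K ^ (2 * m')) ≤ (LD.card : ℝ) := by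
    have hKne : K ≠ 0 := ne_of_gt hK0
    have hnne : (n:ℝ) ≠ 0 := ne_of_gt hnR
    have heq : ((n:ℝ) ^ m / 2) / ((K ^ 2 * n) ^ m') = (n:ℝ) / (2 * K ^ (2 * m')) := by
      rw [hmdef, pow_succ, mul_pow, pow_mul]
      field_simp
    rw [← heq]
    exact le_trans (div_le_div₀ (Nat.cast_nonneg _) hcardL hTposR hTcard) hd
  have hLDpos : 0 < LD.card := by
    rcases Nat.eq_zero_or_pos LD.card with h0 | h
    · exfalso
      rw [h0] at hLDcard
      have hpos : (0:ℝ) < (n:ℝ) / (2 * K ^ (2 * m')) := div_pos hnR (mul_pos two_pos (pow_pos hK0 _))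
      simp only [Nat.cast_zero] at hLDcard
      linarith
    · exact h
  obtain ⟨z, hz⟩ := Finset.card_pos.mp hLDpos
  have hstruct : ∀ y ∈ LD, ∀ i, (y i : G) - (z i : G) = (y 0 : G) - (z 0 : G) := by
    intro y hy i
    have hky : k y = d := (Finset.mem_filter.mp hy).2
    have hkz : k z = d := (Finset.mem_filter.mp hz).2
    rcases Fin.eq_zero_or_eq_succ i with h0 | ⟨j, hj⟩
    · rw [h0]
    · have e1 : (y i : G) - y 0 = (z i : G) - z 0 := by
        rw [hj]
        show k y j = k z j
        rw [hky, hkz]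
      have e2 : (y i : G) - z i - ((y 0 : G) - z 0)
          = ((y i : G) - y 0) - ((z i : G) - z 0) := by abel
      rw [e1, sub_self] at e2
      exact sub_eq_zero.mp e2
  set X := LD.image (fun y => ((y 0 : G) - (z 0 : G))) with hX
  have hXcard : X.card = LD.card := by
    rw [hX]
    apply Finset.card_image_of_injOn
    intro y hy y' hy' hxy
    simp only at hxy
    have h00 : (y 0 : G) = (y' 0 : G) := sub_left_inj.mp hxy
    funext i
    apply Subtype.ext
    have e3 : (y i : G) - z i = (y' i : G) - z i := by
      rw [hstruct y hy i, hstruct y' hy' i, h00]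
    exact sub_left_inj.mp e3
  refine ⟨X, ?_, ?_⟩
  · have h2K1 : (1:ℝ) ≤ 2 * K := by linarith
    have hbase : (0:ℝ) < 2 * K := by linarith
    have hexp : ((2 * m' + 1 : ℕ) : ℝ) ≤ 20 * ε⁻¹ ^ 2 := by
      push_cast
      linarith [hm'ub, hε2]
    have hstep1 : 2 * K ^ (2 * m') ≤ (2 * K) ^ (2 * m' + 1) := by
      rw [mul_pow]
      have hKp : K ^ (2 * m') ≤ K ^ (2 * m' + 1) := pow_le_pow_right₀ hK (Nat.le_succ _)
      have h2p : (2:ℝ) ≤ 2 ^ (2 * m' + 1) := by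
        calc (2:ℝ) = 2 ^ 1 := (pow_one 2).symm
          _ ≤ 2 ^ (2 * m' + 1) := pow_le_pow_right₀ one_le_two (by omega)
      exact mul_le_mul h2p hKp (pow_nonneg (le_of_lt hK0) _) (by positivity)
    have hstep2 : ((2 * K) ^ (2 * m' + 1) : ℝ) ≤ (2 * K) ^ ((20:ℝ) * ε⁻¹ ^ 2) := by
      rw [← Real.rpow_natCast (2 * K) (2 * m' + 1)]
      exact Real.rpow_le_rpow_of_exponent_le h2K1 hexp
    have hinv : (2 * K) ^ (-(20 * ε⁻¹ ^ 2)) ≤ (2 * K ^ (2 * m'))⁻¹ := by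
      rw [Real.rpow_neg (le_of_lt hbase)]
      exact inv_anti₀ (by positivity) (le_trans hstep1 hstep2)
    calc (2 * K) ^ (-(20 * ε⁻¹ ^ 2)) * (n:ℝ)
        ≤ (2 * K ^ (2 * m'))⁻¹ * n := mul_le_mul_of_nonneg_right hinv (Nat.cast_nonneg _)
      _ = (n:ℝ) / (2 * K ^ (2 * m')) := by ring
      _ ≤ (LD.card : ℝ) := hLDcard
      _ = (X.card : ℝ) := by rw [hXcard]
  · intro x hx
    rw [hX, Finset.mem_image] at hx
    obtain ⟨y, hy, rfl⟩ := hx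
    have hyL : y ∈ L := (Finset.mem_filter.mp hy).1
    have hzL : z ∈ L := (Finset.mem_filter.mp hz).1
    have hmemx' : (z 0 : G) - (y 0 : G) ∈ A - A := Finset.sub_mem_sub (z 0).2 (y 0).2
    set x := (y 0 : G) - (z 0 : G) with hxdef
    have htau : tau x (Gt y) = Gt z := by
      funext t
      show (m:ℝ)⁻¹ * ∑ i, f (t + x - (y i : G)) = (m:ℝ)⁻¹ * ∑ i, f (t - (z i : G))
      congr 1
      refine Finset.sum_congr rfl fun i _ => ?_
      congr 1
      have e := hstruct y hy i
      rw [hxdef, ← e]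
      abel
    have hdecomp : tau x g - g = tau x (g - Gt y) + (Gt z - g) := by
      funext t
      have e := congrFun htau t
      simp only [tau] at e
      simp only [tau, Pi.sub_apply, Pi.add_apply]
      rw [e]
      ring
    rw [hdecomp]
    have hsupp1 : ∀ t ∉ B, (tau x (g - Gt y)) t = 0 := by
      intro t ht
      have htx : t + x ∉ S + A := by
        intro hmem
        apply ht
        have hadd := Finset.add_mem_add hmem hmemx'
        have he : (t + x) + ((z 0 : G) - y 0) = t := by rw [hxdef]; abel
        rw [he] at hadd
        exact hSAB2 t hadd
      show (g - Gt y) (t + x) = 0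
      simp [Pi.sub_apply, hgsupp _ htx, hGtsupp y _ htx]
    have hsupp2 : ∀ t ∉ B, (Gt z - g) t = 0 := by
      intro t ht
      have h1 : t ∉ S + A := fun h => ht (hSA_B t h)
      simp [Pi.sub_apply, hgsupp t h1, hGtsupp z t h1]
    refine le_trans (l2norm_add_le B _ _ hsupp1 hsupp2) ?_
    have hb1 : l2norm (tau x (g - Gt y)) = l2norm (Gt y - g) := by
      rw [l2norm_tau, l2norm_sub_comm]
    rw [hb1]
    have hby := hLbound y hyL
    have hbz := hLbound z hzL
    linarith

end CSaux

theorem croot_sisask_l2 :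
    ∃ C : ℝ, 0 < C ∧
      ∀ (G : Type) (_ : AddCommGroup G) (_ : DecidableEq G)
        (A : Finset G), A.Nonempty → ∀ K : ℝ, 1 ≤ K →
        ((A + A).card : ℝ) ≤ K * A.card →
        ∀ f : G → ℝ, (Function.support f).Finite →
        ∀ ε : ℝ, 0 < ε → ε ≤ 1 →
        ∃ X : Finset G,
          (2 * K) ^ (-(C * (ε⁻¹ ^ 2))) * A.card ≤ (X.card : ℝ) ∧
          ∀ x ∈ X, l2norm (tau x (conv f (muF A)) - conv f (muF A)) ≤ ε * l2norm f := by
  refine ⟨20, by norm_num, ?_⟩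
  intro G iG iDG A hA K hK hAA f hf ε hε hε1
  exact @CSaux.main G iG iDG A hA K hK hAA f hf ε hε hε1
end

section
/- Let A be a finite nonempty subset of an abelian group G and suppose X ⊆ G is such that ‖τ_x(1_A * 1_A) - 1_A * 1_A‖_{ℓ^2}^2 ≤ ‖1_A * 1_A‖_{ℓ^2}^2 / 4 holds for every x in the k-fold sumset kX. Then kX ⊆ 2A - 2A. -/
open Pointwise

/-- Indicator function of a finite set. -/
def ind {G : Type*} [DecidableEq G] (A : Finset G) : G → ℝ :=
  fun x => if x ∈ A then 1 else 0

/-- Square of the `ℓ²(G)` norm. -/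
noncomputable def l2sq {G : Type*} (f : G → ℝ) : ℝ :=
  ∑' y, (f y) ^ 2

section aux
variable {G : Type*} [AddCommGroup G] [DecidableEq G] (A : Finset G)

lemma conv_ind_eq (x : G) :
    conv (ind A) (ind A) x = ∑ y ∈ A, ind A (x - y) := by
  unfold conv
  rw [tsum_eq_sum (s := A) (fun b hb => by simp [ind, hb])]
  refine Finset.sum_congr rfl fun y hy => by simp [ind, hy]

lemma conv_ind_nonneg (x : G) : 0 ≤ conv (ind A) (ind A) x := by
  rw [conv_ind_eq]
  exact Finset.sum_nonneg fun y _ => by unfold ind; positivity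

lemma conv_ind_support {x : G} (hx : conv (ind A) (ind A) x ≠ 0) : x ∈ A + A := by
  rw [conv_ind_eq] at hx
  obtain ⟨y, hy, hne⟩ := Finset.exists_ne_zero_of_sum_ne_zero hx
  have hxy : x - y ∈ A := by by_contra hc; simp [ind, hc] at hne
  exact Finset.mem_add.2 ⟨y, hy, x - y, hxy, by abel⟩

lemma conv_ind_one_le {a b : G} (ha : a ∈ A) (hb : b ∈ A) :
    1 ≤ conv (ind A) (ind A) (a + b) := by
  rw [conv_ind_eq]
  have : ind A (a + b - a) = 1 := by simp [ind, hb]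
  calc (1 : ℝ) = ind A (a + b - a) := this.symm
    _ ≤ ∑ y ∈ A, ind A (a + b - y) :=
      Finset.single_le_sum (f := fun y => ind A (a + b - y))
        (fun y _ => by unfold ind; positivity) ha

lemma sq_summable (f : G → ℝ) (hf : ∀ x, f x ≠ 0 → x ∈ A + A) :
    Summable (fun y => f y ^ 2) := by
  apply summable_of_finite_support
  apply Set.Finite.subset (A + A : Finset G).finite_toSet
  intro y hy
  exact hf y (by simpa [Function.support] using hy)

end aux

theorem kX_subset_2A_sub_2A {G : Type*} [AddCommGroup G] [DecidableEq G]
    (A X : Finset G) (hA : A.Nonempty) (k : ℕ)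
    (h : ∀ x ∈ (k • X : Finset G),
      l2sq (tau x (conv (ind A) (ind A)) - conv (ind A) (ind A)) ≤
        l2sq (conv (ind A) (ind A)) / 4) :
    (k • X : Finset G) ⊆ A + A - (A + A) := by
  intro x hxX
  by_contra hx
  set f := conv (ind A) (ind A) with hf
  have hsupp : ∀ y, f y ≠ 0 → y ∈ A + A := fun y => conv_ind_support A
  have hS : Summable (fun y => f y ^ 2) := sq_summable A f hsupp
  -- translated summability
  have hS' : Summable (fun y => f (y + x) ^ 2) :=
    ((Equiv.addRight x).summable_iff (f := fun y => f y ^ 2)).2 hS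
  -- cross terms vanish
  have hcross : ∀ y, f (y + x) * f y = 0 := by
    intro y
    by_contra hc
    have h1 : f (y + x) ≠ 0 := fun h0 => hc (by simp [h0])
    have h2 : f y ≠ 0 := fun h0 => hc (by simp [h0])
    exact hx (Finset.mem_sub.2 ⟨y + x, hsupp _ h1, y, hsupp _ h2, by abel⟩)
  -- positivity of l2sq f
  obtain ⟨a, ha⟩ := hA
  have hLpos : 0 < l2sq f := by
    have h1 : (1 : ℝ) ≤ f (a + a) := conv_ind_one_le A ha ha
    have : (1 : ℝ) ≤ f (a + a) ^ 2 := by nlinarith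
    calc (0 : ℝ) < 1 := one_pos
      _ ≤ f (a + a) ^ 2 := this
      _ ≤ l2sq f := Summable.le_tsum hS _ (fun y _ => sq_nonneg _)
  -- compute l2sq of difference
  have hdiff : l2sq (tau x f - f) = 2 * l2sq f := by
    unfold l2sq tau
    have hpt : ∀ y, ((fun y => f (y + x)) - f) y ^ 2 = f (y + x) ^ 2 + f y ^ 2 := by
      intro y
      have := hcross y
      simp only [Pi.sub_apply]
      ring_nf
      nlinarith [hcross y]
    calc ∑' y, ((fun y => f (y + x)) - f) y ^ 2
        = ∑' y, (f (y + x) ^ 2 + f y ^ 2) := tsum_congr hpt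
      _ = (∑' y, f (y + x) ^ 2) + ∑' y, f y ^ 2 := Summable.tsum_add hS' hS
      _ = (∑' y, f y ^ 2) + ∑' y, f y ^ 2 := by
          congr 1
          exact (Equiv.addRight x).tsum_eq (fun y => f y ^ 2)
      _ = 2 * ∑' y, f y ^ 2 := by ring
  have hb := h x hxX
  rw [hdiff] at hb
  linarith
end

section
/- Let X be a finite subset of an abelian group G, let l be a positive integer with |lX| ≤ K|(l-1)X|, and let ε ∈ (0,1]. Then X - X ⊆ Bohr(LSpec(lX, ε), 2ε√(2K)). -/
open Pointwise

theorem diff_subset_bohr_of_lspec {G : Type*} [AddCommGroup G] [DecidableEq G]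
    (X : Finset G) (l : ℕ) (hl : 1 ≤ l) (K : ℝ)
    (hK : (((l • X : Finset G)).card : ℝ) ≤ K * (((l - 1) • X : Finset G)).card)
    (ε : ℝ) (hε : 0 < ε) (hε' : ε ≤ 1) :
    ∀ γ : AddChar G ℂ, (∀ t : G, ‖γ t‖ = 1) →
      (∑' z, conv (muF (l • X)) (muF (-(l • X))) z * ‖1 - γ z‖ ^ 2 ≤ ε ^ 2) →
      ∀ x ∈ (X - X : Finset G), ‖γ x - 1‖ ≤ 2 * ε * Real.sqrt (2 * K) := by
  intro γ hγ hsum x hx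
  rw [Finset.mem_sub] at hx
  obtain ⟨a, ha, b, hb, rfl⟩ := hx
  set A : Finset G := l • X with hA
  set T : Finset G := (l - 1) • X with hT
  have hXne : X.Nonempty := ⟨a, ha⟩
  have hsumset : A = T + X := by
    rw [hA, hT, ← succ_nsmul X (l - 1), Nat.sub_add_cancel hl]
  have hTA : ∀ c ∈ X, ∀ z ∈ T, z + c ∈ A := by
    intro c hc z hz
    rw [hsumset]
    exact Finset.add_mem_add hz hc
  have hTne : T.Nonempty := by
    rw [hT]
    clear_value T A
    induction (l - 1) with
    | zero => exact ⟨0, by simp [zero_nsmul, Finset.mem_zero]⟩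
    | succ n ih => rw [succ_nsmul]; exact ih.add hXne
  have hAne : A.Nonempty := by
    rw [hsumset]; exact hTne.add hXne
  have hAcard : (1 : ℝ) ≤ (A.card : ℝ) := by exact_mod_cast hAne.card_pos
  have hTcard : (1 : ℝ) ≤ (T.card : ℝ) := by exact_mod_cast hTne.card_pos
  set c : ℝ := ((A.card : ℝ))⁻¹ with hc
  have hc0 : 0 < c := by positivity
  -- character norm manipulations
  have hshift : ∀ s t u : G, ‖γ (u + s) - γ (u + t)‖ = ‖γ s - γ t‖ := by
    intro s t u
    rw [AddChar.map_add_eq_mul, AddChar.map_add_eq_mul, ← mul_sub, norm_mul, hγ, one_mul]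
  have hw : ∀ u v : G, ‖(1 : ℂ) - γ (u - v)‖ = ‖γ v - γ u‖ := by
    intro u v
    have h := hshift 0 (u - v) v
    rw [add_zero, add_sub_cancel, AddChar.map_zero_eq_one] at h
    exact h.symm
  -- Step 1: tsum equals normalized double sum
  have hconv : ∀ z : G, conv (muF A) (muF (-A)) z
      = ∑ y ∈ A, c * (if y - z ∈ A then c else 0) := by
    intro z
    rw [conv, tsum_eq_sum (s := A) (by
      intro y hy
      simp [muF, hy])]
    refine Finset.sum_congr rfl fun y hy => ?_
    simp only [muF, hy, if_true, Finset.card_neg, ← hc]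
    have hmem : z - y ∈ -A ↔ y - z ∈ A := by
      constructor
      · intro h
        rcases Finset.mem_neg.mp h with ⟨w, hw, hwe⟩
        have hwe' : w = y - z := by
          have := congrArg Neg.neg hwe
          simpa [neg_sub] using this
        rwa [hwe'] at hw
      · intro h
        exact Finset.mem_neg.mpr ⟨y - z, h, by abel⟩
    simp only [hmem]
  set S : Finset G := A - A with hS
  have hsupp : ∀ z ∉ S, conv (muF A) (muF (-A)) z * ‖1 - γ z‖ ^ 2 = 0 := by
    intro z hz
    rw [hconv]
    have : ∀ y ∈ A, c * (if y - z ∈ A then c else 0) = 0 := by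
      intro y hy
      have : y - z ∉ A := by
        intro h
        exact hz (Finset.mem_sub.mpr ⟨y, hy, y - z, h, by abel⟩)
      simp [this]
    rw [Finset.sum_congr rfl this, Finset.sum_const, smul_zero, zero_mul]
  have h1 : ∑' z, conv (muF A) (muF (-A)) z * ‖1 - γ z‖ ^ 2
      = ∑ y ∈ A, ∑ v ∈ A, c * c * ‖(1 : ℂ) - γ (y - v)‖ ^ 2 := by
    rw [tsum_eq_sum (s := S) hsupp]
    have : ∀ z ∈ S, conv (muF A) (muF (-A)) z * ‖1 - γ z‖ ^ 2
        = ∑ y ∈ A, (if y - z ∈ A then c * c * ‖(1 : ℂ) - γ z‖ ^ 2 else 0) := by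
      intro z _
      rw [hconv, Finset.sum_mul]
      refine Finset.sum_congr rfl fun y _ => ?_
      by_cases h : y - z ∈ A <;> simp [h] <;> ring
    rw [Finset.sum_congr rfl this, Finset.sum_comm]
    refine Finset.sum_congr rfl fun y hy => ?_
    have himg : S.filter (fun z => y - z ∈ A) = A.image (fun v => y - v) := by
      ext z
      simp only [Finset.mem_filter, Finset.mem_image]
      constructor
      · rintro ⟨_, h2⟩
        exact ⟨y - z, h2, by abel⟩
      · rintro ⟨v, hv, rfl⟩
        refine ⟨Finset.mem_sub.mpr ⟨y, hy, v, hv, rfl⟩, by simpa using hv⟩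
    rw [← Finset.sum_filter, himg,
      Finset.sum_image (fun u _ v _ h => by simpa using sub_right_injective h)]
  -- Step 2: double sum bound
  have hD : ∑ u ∈ A, ∑ v ∈ A, ‖γ v - γ u‖ ^ 2 ≤ ε ^ 2 * (A.card : ℝ) ^ 2 := by
    have h2 : c * c * ∑ u ∈ A, ∑ v ∈ A, ‖γ v - γ u‖ ^ 2 ≤ ε ^ 2 := by
      calc c * c * ∑ u ∈ A, ∑ v ∈ A, ‖γ v - γ u‖ ^ 2
          = ∑ u ∈ A, ∑ v ∈ A, c * c * ‖(1 : ℂ) - γ (u - v)‖ ^ 2 := by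
            rw [Finset.mul_sum]
            refine Finset.sum_congr rfl fun u _ => ?_
            rw [Finset.mul_sum]
            refine Finset.sum_congr rfl fun v _ => ?_
            rw [hw]
        _ ≤ ε ^ 2 := by rw [← h1]; exact hsum
    have hcsq : c * c = (((A.card : ℝ)) ^ 2)⁻¹ := by rw [hc]; ring
    rw [hcsq] at h2
    have hA2 : ((A.card : ℝ) ^ 2) ≠ 0 := by positivity
    calc ∑ u ∈ A, ∑ v ∈ A, ‖γ v - γ u‖ ^ 2
        = (((A.card : ℝ) ^ 2)⁻¹ * ∑ u ∈ A, ∑ v ∈ A, ‖γ v - γ u‖ ^ 2) * (A.card : ℝ) ^ 2 := by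
          field_simp
      _ ≤ ε ^ 2 * (A.card : ℝ) ^ 2 := mul_le_mul_of_nonneg_right h2 (by positivity)
  -- Step 3: pointwise bound and summation
  set q : ℝ := ‖γ (a - b) - 1‖ ^ 2 with hq
  have hqab : ∀ z : G, ‖γ (a - b) - 1‖ = ‖γ (z + a) - γ (z + b)‖ := by
    intro z
    rw [hshift a b z, ← norm_sub_rev (γ b), ← hw a b, norm_sub_rev]
  have hpt : ∀ z ∈ T, ∀ u ∈ A,
      q ≤ 2 * ‖γ (z + a) - γ u‖ ^ 2 + 2 * ‖γ (z + b) - γ u‖ ^ 2 := by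
    intro z _ u _
    have htri : ‖γ (z + a) - γ (z + b)‖ ≤ ‖γ (z + a) - γ u‖ + ‖γ u - γ (z + b)‖ :=
      norm_sub_le_norm_sub_add_norm_sub _ _ _
    have h1' : q ≤ (‖γ (z + a) - γ u‖ + ‖γ u - γ (z + b)‖) ^ 2 := by
      rw [hq, hqab z]
      exact pow_le_pow_left₀ (norm_nonneg _) htri 2
    have hrev : ‖γ u - γ (z + b)‖ = ‖γ (z + b) - γ u‖ := norm_sub_rev _ _
    rw [hrev] at h1'
    nlinarith [h1', sq_nonneg (‖γ (z + a) - γ u‖ - ‖γ (z + b) - γ u‖)]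
  have hsumin : ∀ c' ∈ X, ∀ u : G, ∑ z ∈ T, ‖γ (z + c') - γ u‖ ^ 2
      ≤ ∑ v ∈ A, ‖γ v - γ u‖ ^ 2 := by
    intro c' hc' u
    have himg : ∑ v ∈ T.image (fun z => z + c'), ‖γ v - γ u‖ ^ 2
        = ∑ z ∈ T, ‖γ (z + c') - γ u‖ ^ 2 :=
      Finset.sum_image (fun x _ y _ h => by simpa using h)
    rw [← himg]
    refine Finset.sum_le_sum_of_subset_of_nonneg ?_ (fun i _ _ => by positivity)
    intro v hv
    obtain ⟨z, hz, rfl⟩ := Finset.mem_image.mp hv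
    exact hTA c' hc' z hz
  have hmain : (T.card : ℝ) * (A.card : ℝ) * q
      ≤ 4 * (ε ^ 2 * (A.card : ℝ) ^ 2) := by
    have h3 : (T.card : ℝ) * (A.card : ℝ) * q = ∑ z ∈ T, ∑ u ∈ A, q := by
      simp [Finset.sum_const, mul_assoc]
    rw [h3]
    calc ∑ z ∈ T, ∑ u ∈ A, q
        ≤ ∑ z ∈ T, ∑ u ∈ A, (2 * ‖γ (z + a) - γ u‖ ^ 2 + 2 * ‖γ (z + b) - γ u‖ ^ 2) := by
          refine Finset.sum_le_sum fun z hz => Finset.sum_le_sum fun u hu => hpt z hz u hu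
      _ = ∑ u ∈ A, ∑ z ∈ T, (2 * ‖γ (z + a) - γ u‖ ^ 2 + 2 * ‖γ (z + b) - γ u‖ ^ 2) :=
          Finset.sum_comm
      _ ≤ ∑ u ∈ A, (2 * ∑ v ∈ A, ‖γ v - γ u‖ ^ 2 + 2 * ∑ v ∈ A, ‖γ v - γ u‖ ^ 2) := by
          refine Finset.sum_le_sum fun u _ => ?_
          rw [Finset.sum_add_distrib, ← Finset.mul_sum, ← Finset.mul_sum]
          have ha' := hsumin a ha u
          have hb' := hsumin b hb u
          linarith
      _ = 4 * ∑ u ∈ A, ∑ v ∈ A, ‖γ v - γ u‖ ^ 2 := by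
          rw [Finset.mul_sum]
          exact Finset.sum_congr rfl fun u _ => by ring
      _ ≤ 4 * (ε ^ 2 * (A.card : ℝ) ^ 2) := by linarith [hD]
  -- Step 4: conclude
  have hK0 : 0 < K := by nlinarith
  have hq8 : q ≤ 8 * K * ε ^ 2 := by
    have step1 : (T.card : ℝ) * (A.card : ℝ) * q
        ≤ 4 * ε ^ 2 * K * ((T.card : ℝ) * (A.card : ℝ)) := by
      nlinarith [hmain, mul_le_mul_of_nonneg_left hK
        (show (0 : ℝ) ≤ 4 * ε ^ 2 * (A.card : ℝ) by positivity)]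
    have h4 : q * ((T.card : ℝ) * (A.card : ℝ))
        ≤ (4 * K * ε ^ 2) * ((T.card : ℝ) * (A.card : ℝ)) := by nlinarith [step1]
    have h5 : q ≤ 4 * K * ε ^ 2 :=
      le_of_mul_le_mul_right h4 (by nlinarith)
    have h6 : 0 ≤ K * ε ^ 2 := by positivity
    linarith
  have hrhs : (2 * ε * Real.sqrt (2 * K)) ^ 2 = 8 * K * ε ^ 2 := by
    rw [mul_pow, mul_pow, Real.sq_sqrt (by positivity)]
    ring
  have : ‖γ (a - b) - 1‖ ^ 2 ≤ (2 * ε * Real.sqrt (2 * K)) ^ 2 := by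
    rw [hrhs]; exact hq8
  have h5 := Real.sqrt_le_sqrt this
  rwa [Real.sqrt_sq (norm_nonneg _), Real.sqrt_sq (by positivity)] at h5
end
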